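/- arXiv:2504.17566 — 4 statements merged into one kernel-verified Lean document; each statement's English description precedes it below -/
import Mathlib

section
/- Let W be a Banach space and U a separable Hilbert space, T > 0, and let G : [0,T] → L(W) be strongly continuous with G(0) = I, sup_{t∈[0,T]} ‖G(t)‖ ≤ N, G(t) compact for every t ∈ (0,T], and t ↦ G(t) operator-norm continuous on (0,T]. Let B ∈ L(U;W), λ > 0, and ζ, ζ₁ ∈ W. Consider the cost functional H(w,u) = ‖w(T) − ζ₁‖_W² + λ ∫₀ᵀ ‖u(t)‖_U² dt over the admissible class A_ad = {(w,u) : u ∈ L²([0,T];U) and w(t) = G(t)ζ + ∫₀ᵗ G(t−s)B u(s) ds for all t ∈ [0,T]}. Then the minimization problem min_{(w,u)∈A_ad} H(w,u) possesses a unique optimal pair (w⁰, u⁰) ∈ A_ad. -/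
set_option linter.unusedSectionVars false
set_option maxHeartbeats 1000000
open MeasureTheory Set Filter


section helpers
variable {W U : Type*}
    [NormedAddCommGroup W] [NormedSpace ℝ W] [CompleteSpace W]
    [NormedAddCommGroup U] [InnerProductSpace ℝ U] [CompleteSpace U]
    {T : ℝ} {G : ℝ → W →L[ℝ] W} {N : ℝ} {B : U →L[ℝ] W}

lemma restrict_Icc_eq_Ico (T : ℝ) :
    (volume.restrict (Icc (0:ℝ) T) : Measure ℝ) = volume.restrict (Ico 0 T) :=
  Measure.restrict_congr_set Ico_ae_eq_Icc.symm

lemma restrict_Icc_eq_Ioc (T : ℝ) :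
    (volume.restrict (Icc (0:ℝ) T) : Measure ℝ) = volume.restrict (Ioc 0 T) :=
  Measure.restrict_congr_set Ioc_ae_eq_Icc.symm

lemma aesm_theta (hGnorm : ContinuousOn G (Set.Ioc 0 T)) :
    AEStronglyMeasurable (fun s => G (T - s)) (volume.restrict (Icc 0 T)) := by
  have h1 : ContinuousOn (fun s : ℝ => G (T - s)) (Ico 0 T) := by
    apply hGnorm.comp (continuous_const.sub continuous_id).continuousOn
    intro s hs
    simp only [Function.comp, Pi.sub_apply, id_eq, mem_Ioc]
    exact ⟨by linarith [hs.2], by linarith [hs.1]⟩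
  rw [restrict_Icc_eq_Ico]
  exact h1.aestronglyMeasurable measurableSet_Ico

lemma aesm_integrand (hGnorm : ContinuousOn G (Set.Ioc 0 T)) {u : ℝ → U}
    (hu : AEStronglyMeasurable u (volume.restrict (Icc 0 T))) :
    AEStronglyMeasurable (fun s => G (T - s) (B (u s))) (volume.restrict (Icc 0 T)) := by
  have h2 : AEStronglyMeasurable (fun s => B (u s)) (volume.restrict (Icc 0 T)) :=
    B.continuous.comp_aestronglyMeasurable hu
  have := ((ContinuousLinearMap.apply ℝ W).flip :
      (W →L[ℝ] W) →L[ℝ] W →L[ℝ] W).aestronglyMeasurable_comp₂ (aesm_theta hGnorm) h2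
  simpa using this

lemma ae_bound_integrand (hT : 0 < T) (hGN : ∀ t ∈ Set.Icc (0:ℝ) T, ‖G t‖ ≤ N)
    (u : ℝ → U) :
    ∀ᵐ s ∂(volume.restrict (Icc (0:ℝ) T)), ‖G (T - s) (B (u s))‖ ≤ N * ‖B‖ * ‖u s‖ := by
  filter_upwards [ae_restrict_mem measurableSet_Icc] with s hs
  have h1 : ‖G (T - s)‖ ≤ N := hGN _ ⟨by linarith [hs.2], by linarith [hs.1]⟩
  have h2 : ‖B (u s)‖ ≤ ‖B‖ * ‖u s‖ := B.le_opNorm _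
  calc ‖G (T - s) (B (u s))‖ ≤ ‖G (T - s)‖ * ‖B (u s)‖ := (G (T-s)).le_opNorm _
    _ ≤ N * ‖B‖ * ‖u s‖ := by
        nlinarith [norm_nonneg (B (u s)), norm_nonneg (u s), norm_nonneg (G (T-s)),
          norm_nonneg B]

lemma integrable_integrand (hT : 0 < T) (hGN : ∀ t ∈ Set.Icc (0:ℝ) T, ‖G t‖ ≤ N)
    (hGnorm : ContinuousOn G (Set.Ioc 0 T)) {u : ℝ → U}
    (hu : MemLp u 2 (volume.restrict (Icc 0 T))) :
    Integrable (fun s => G (T - s) (B (u s))) (volume.restrict (Icc 0 T)) := by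
  have hint : Integrable u (volume.restrict (Icc 0 T)) := hu.integrable one_le_two
  exact ((hint.norm).const_mul (N * ‖B‖)).mono' (aesm_integrand hGnorm hu.1)
    (ae_bound_integrand hT hGN u)

lemma integral_norm_le_L2 {α : Type*} [MeasurableSpace α] (μ : Measure α) [IsFiniteMeasure μ]
    {f : α → U} (hf : MemLp f 2 μ) :
    ∫ a, ‖f a‖ ∂μ ≤ ((μ univ).toReal ^ (1/2 : ℝ)) * (eLpNorm f 2 μ).toReal := by
  have h1 : eLpNorm f 1 μ ≤ eLpNorm f 2 μ * μ univ ^ (1/2 : ℝ) := by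
    have := eLpNorm_le_eLpNorm_mul_rpow_measure_univ (μ := μ) (p := 1) (q := 2)
      one_le_two hf.1
    convert this using 3
    norm_num
  have h2 : ∫ a, ‖f a‖ ∂μ = (eLpNorm f 1 μ).toReal := by
    rw [integral_norm_eq_lintegral_enorm hf.1, eLpNorm_one_eq_lintegral_enorm]
  rw [h2]
  have hfin : eLpNorm f 2 μ * μ univ ^ (1/2 : ℝ) ≠ ⊤ :=
    ENNReal.mul_ne_top hf.2.ne
      (ENNReal.rpow_ne_top_of_nonneg (by norm_num) (measure_ne_top μ univ))
  calc (eLpNorm f 1 μ).toReal ≤ (eLpNorm f 2 μ * μ univ ^ (1/2 : ℝ)).toReal :=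
        ENNReal.toReal_mono hfin h1
    _ = ((μ univ).toReal ^ (1/2 : ℝ)) * (eLpNorm f 2 μ).toReal := by
        rw [ENNReal.toReal_mul, ← ENNReal.toReal_rpow]; ring

lemma norm_sq_eq_integral {α : Type*} [MeasurableSpace α] {μ : Measure α}
    (f : Lp U 2 μ) : ‖f‖ ^ 2 = ∫ a, ‖f a‖ ^ 2 ∂μ := by
  rw [← real_inner_self_eq_norm_sq, L2.inner_def]
  exact integral_congr_ae (Filter.Eventually.of_forall fun a => real_inner_self_eq_norm_sq _)

lemma exists_K (hT : 0 < T) (hGN : ∀ t ∈ Set.Icc (0:ℝ) T, ‖G t‖ ≤ N)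
    (hGnorm : ContinuousOn G (Set.Ioc 0 T)) :
    ∃ K : Lp U 2 (volume.restrict (Icc (0:ℝ) T)) →L[ℝ] W,
      ∀ f : Lp U 2 (volume.restrict (Icc (0:ℝ) T)),
        K f = ∫ s, G (T - s) (B (f s)) ∂(volume.restrict (Icc (0:ℝ) T)) := by
  set μ := volume.restrict (Icc (0:ℝ) T) with hμ
  have hN : 0 ≤ N := le_trans (norm_nonneg _) (hGN T ⟨hT.le, le_refl T⟩)
  set Klin : Lp U 2 μ →ₗ[ℝ] W :=
    { toFun := fun f => ∫ s, G (T - s) (B (f s)) ∂μ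
      map_add' := by
        intro f g
        have h1 : ∀ᵐ s ∂μ, G (T - s) (B ((f + g : Lp U 2 μ) s))
            = G (T - s) (B (f s)) + G (T - s) (B (g s)) := by
          filter_upwards [Lp.coeFn_add f g] with s hs
          rw [hs]; simp
        rw [integral_congr_ae h1, integral_add
          (integrable_integrand hT hGN hGnorm (Lp.memLp f))
          (integrable_integrand hT hGN hGnorm (Lp.memLp g))]
      map_smul' := by
        intro c f
        have h1 : ∀ᵐ s ∂μ, G (T - s) (B ((c • f : Lp U 2 μ) s))
            = c • G (T - s) (B (f s)) := by
          filter_upwards [Lp.coeFn_smul c f] with s hs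
          rw [hs]; simp
        rw [integral_congr_ae h1, integral_smul]
        rfl } with hKlin
  refine ⟨Klin.mkContinuous (N * ‖B‖ * ((μ univ).toReal ^ (1/2 : ℝ))) ?_, fun f => rfl⟩
  intro f
  have hmem : MemLp (⇑f) 2 μ := Lp.memLp f
  have hint : Integrable (⇑f) μ := hmem.integrable one_le_two
  have hnormf : (eLpNorm (⇑f) 2 μ).toReal = ‖f‖ := (Lp.norm_def f).symm
  calc ‖Klin f‖ ≤ ∫ s, ‖G (T - s) (B (f s))‖ ∂μ := norm_integral_le_integral_norm _
    _ ≤ ∫ s, (N * ‖B‖) * ‖f s‖ ∂μ := by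
        refine integral_mono_ae (integrable_integrand hT hGN hGnorm hmem).norm
          (hint.norm.const_mul _) ?_
        exact ae_bound_integrand hT hGN (⇑f)
    _ = (N * ‖B‖) * ∫ s, ‖f s‖ ∂μ := integral_const_mul _ _
    _ ≤ (N * ‖B‖) * (((μ univ).toReal ^ (1/2 : ℝ)) * (eLpNorm (⇑f) 2 μ).toReal) := by
        refine mul_le_mul_of_nonneg_left (integral_norm_le_L2 μ hmem) ?_
        positivity
    _ = N * ‖B‖ * ((μ univ).toReal ^ (1/2 : ℝ)) * ‖f‖ := by rw [hnormf]; ring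
end helpers


lemma strongly_convex_min {E W : Type*}
    [NormedAddCommGroup E] [InnerProductSpace ℝ E] [CompleteSpace E]
    [NormedAddCommGroup W] [NormedSpace ℝ W]
    (K : E →L[ℝ] W) (c : W) (lam : ℝ) (hlam : 0 < lam) :
    ∃ f₀ : E, (∀ f : E, ‖c + K f₀‖ ^ 2 + lam * ‖f₀‖ ^ 2 ≤ ‖c + K f‖ ^ 2 + lam * ‖f‖ ^ 2) ∧
      (∀ f : E, ‖c + K f‖ ^ 2 + lam * ‖f‖ ^ 2 = ‖c + K f₀‖ ^ 2 + lam * ‖f₀‖ ^ 2 → f = f₀) := by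
  set φ : E → ℝ := fun f => ‖c + K f‖ ^ 2 + lam * ‖f‖ ^ 2 with hφ
  have hφc : Continuous φ := by
    apply Continuous.add
    · exact (((continuous_const.add K.continuous)).norm.pow 2)
    · exact continuous_const.mul (continuous_norm.pow 2)
  have hφ0 : ∀ f, 0 ≤ φ f := fun f => by positivity
  have key : ∀ f g : E,
      φ ((2⁻¹ : ℝ) • (f + g)) + lam / 4 * ‖f - g‖ ^ 2 ≤ (φ f + φ g) / 2 := by
    intro f g
    have hK : c + K ((2⁻¹ : ℝ) • (f + g)) = (2⁻¹ : ℝ) • ((c + K f) + (c + K g)) := by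
      rw [K.map_smul, K.map_add]
      module
    have h1 : ‖c + K ((2⁻¹ : ℝ) • (f + g))‖ ^ 2
        ≤ (‖c + K f‖ ^ 2 + ‖c + K g‖ ^ 2) / 2 := by
      rw [hK]
      have h2 : ‖(2⁻¹ : ℝ) • ((c + K f) + (c + K g))‖ ≤ (‖c + K f‖ + ‖c + K g‖) / 2 := by
        rw [norm_smul]
        have := norm_add_le (c + K f) (c + K g)
        rw [Real.norm_eq_abs, abs_of_pos (by norm_num : (0:ℝ) < 2⁻¹)]
        linarith
      have h2' : ‖(2⁻¹ : ℝ) • ((c + K f) + (c + K g))‖ ^ 2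
          ≤ ((‖c + K f‖ + ‖c + K g‖) / 2) ^ 2 := by
        apply pow_le_pow_left₀ (norm_nonneg _) h2
      nlinarith [h2', sq_nonneg (‖c + K f‖ - ‖c + K g‖)]
    have hp := parallelogram_law_with_norm ℝ f g
    have h2 : ‖(2⁻¹ : ℝ) • (f + g)‖ ^ 2 = ‖f + g‖ ^ 2 / 4 := by
      rw [norm_smul, Real.norm_eq_abs]; rw [abs_of_pos (by norm_num)]; ring
    have h3 : ‖f + g‖ ^ 2 + ‖f - g‖ ^ 2 = 2 * (‖f‖ ^ 2 + ‖g‖ ^ 2) := by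
      simpa [sq] using hp
    simp only [hφ]
    nlinarith [h1, h2, h3, hlam]
  have hne : Nonempty E := ⟨0⟩
  set m : ℝ := ⨅ f : E, φ f with hm
  have hbdd : BddBelow (Set.range φ) := ⟨0, by rintro y ⟨f, rfl⟩; exact hφ0 f⟩
  have hm_le : ∀ f, m ≤ φ f := fun f => ciInf_le hbdd f
  have hseq : ∀ n : ℕ, ∃ f : E, φ f < m + 1 / (n + 1) := by
    intro n
    apply exists_lt_of_ciInf_lt
    have : (0:ℝ) < 1 / (n + 1) := by positivity
    linarith
  choose s hs using hseq
  have hdist : ∀ n k : ℕ, lam / 4 * ‖s n - s k‖ ^ 2 < (1 / (n + 1) + 1 / (k + 1)) / 2 := by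
    intro n k
    have h1 := hm_le ((2⁻¹ : ℝ) • (s n + s k))
    have h2 := key (s n) (s k)
    have h3 := hs n
    have h4 := hs k
    linarith
  have hcauchy : CauchySeq s := by
    rw [Metric.cauchySeq_iff']
    intro ε hε
    obtain ⟨N, hN⟩ := exists_nat_one_div_lt (show (0:ℝ) < lam * ε ^ 2 / 8 by positivity)
    refine ⟨N, fun n hn => ?_⟩
    have hcast : (N:ℝ) ≤ n := Nat.cast_le.mpr hn
    have h1 : (1:ℝ) / (n + 1) ≤ 1 / (N + 1) := by
      apply one_div_le_one_div_of_le (by positivity)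
      linarith
    have h2 := hdist n N
    rw [dist_eq_norm]
    have hε2 : (0:ℝ) < ε ^ 2 := by positivity
    have hd2 : ‖s n - s N‖ ^ 2 < ε ^ 2 := by
      nlinarith [h1, h2, hN, hlam, hε2, mul_pos hlam hε2]
    exact lt_of_pow_lt_pow_left₀ 2 hε.le hd2
  obtain ⟨f₀, hf₀⟩ := cauchySeq_tendsto_of_complete hcauchy
  have hφlim : Tendsto (fun n => φ (s n)) atTop (nhds (φ f₀)) :=
    (hφc.tendsto f₀).comp hf₀
  have hφm : Tendsto (fun n => φ (s n)) atTop (nhds m) := by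
    apply tendsto_of_tendsto_of_tendsto_of_le_of_le (g := fun _ => m)
      (h := fun n : ℕ => m + 1 / (n + 1)) tendsto_const_nhds
    · simpa using (tendsto_const_nhds (x := m)).add (tendsto_one_div_add_atTop_nhds_zero_nat)
    · exact fun n => hm_le (s n)
    · exact fun n => (hs n).le
  have hφf₀ : φ f₀ = m := tendsto_nhds_unique hφlim hφm
  refine ⟨f₀, fun f => ?_, fun g hg => ?_⟩
  · show φ f₀ ≤ φ f
    rw [hφf₀]; exact hm_le f
  · have h1 := hm_le ((2⁻¹ : ℝ) • (g + f₀))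
    have h2 := key g f₀
    have h3 : φ g = m := by
      have hg' : φ g = φ f₀ := hg
      rw [hg', hφf₀]
    rw [h3, hφf₀] at h2
    have h6 : lam / 4 * ‖g - f₀‖ ^ 2 ≤ 0 := by linarith [h1, h2]
    have h4 : ‖g - f₀‖ ^ 2 ≤ 0 := by
      nlinarith [pow_nonneg (norm_nonneg (g - f₀)) 2, hlam, h6]
    have h5 : g - f₀ = 0 := by
      rw [← norm_eq_zero]
      nlinarith [norm_nonneg (g - f₀)]
    exact sub_eq_zero.1 h5


/-- the linear-quadratic regulator problem
`min H(w,u) = ‖w(T) - ζ₁‖² + λ ∫₀ᵀ ‖u(t)‖² dt` over the admissible class of pairs `(w,u)`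
(where `w` is the mild solution `w(t) = G(t)ζ + ∫₀ᵗ G(t-s)Bu(s) ds` associated with
`u ∈ L²([0,T];U)`) has a unique optimal pair `(w⁰,u⁰)`: the control `u⁰` is unique up to
a.e. equality, which determines `w⁰` uniquely. -/
theorem stmt_10 {W U : Type*}
    [NormedAddCommGroup W] [NormedSpace ℝ W] [CompleteSpace W]
    [NormedAddCommGroup U] [InnerProductSpace ℝ U] [CompleteSpace U]
    [TopologicalSpace.SeparableSpace U]
    (T : ℝ) (hT : 0 < T)
    (G : ℝ → W →L[ℝ] W) (N : ℝ)
    (hGsc : ∀ w : W, ContinuousOn (fun t : ℝ => G t w) (Set.Icc 0 T))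
    (hG0 : G 0 = 1)
    (hGN : ∀ t ∈ Set.Icc (0 : ℝ) T, ‖G t‖ ≤ N)
    (hGcpt : ∀ t ∈ Set.Ioc (0 : ℝ) T, IsCompactOperator (⇑(G t)))
    (hGnorm : ContinuousOn G (Set.Ioc 0 T))
    (B : U →L[ℝ] W) (lam : ℝ) (hlam : 0 < lam) (ζ ζ₁ : W) :
    ∃ u₀ : ℝ → U, MemLp u₀ 2 (volume.restrict (Set.Icc 0 T)) ∧
      (∀ u : ℝ → U, MemLp u 2 (volume.restrict (Set.Icc 0 T)) →
        ‖(G T ζ + ∫ s in (0 : ℝ)..T, G (T - s) (B (u₀ s))) - ζ₁‖ ^ 2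
            + lam * ∫ t in Set.Icc (0 : ℝ) T, ‖u₀ t‖ ^ 2
          ≤ ‖(G T ζ + ∫ s in (0 : ℝ)..T, G (T - s) (B (u s))) - ζ₁‖ ^ 2
            + lam * ∫ t in Set.Icc (0 : ℝ) T, ‖u t‖ ^ 2) ∧
      (∀ u : ℝ → U, MemLp u 2 (volume.restrict (Set.Icc 0 T)) →
        ‖(G T ζ + ∫ s in (0 : ℝ)..T, G (T - s) (B (u s))) - ζ₁‖ ^ 2
            + lam * ∫ t in Set.Icc (0 : ℝ) T, ‖u t‖ ^ 2
          = ‖(G T ζ + ∫ s in (0 : ℝ)..T, G (T - s) (B (u₀ s))) - ζ₁‖ ^ 2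
            + lam * ∫ t in Set.Icc (0 : ℝ) T, ‖u₀ t‖ ^ 2 →
        u =ᵐ[volume.restrict (Set.Icc (0 : ℝ) T)] u₀) := by
  obtain ⟨K, hK⟩ := exists_K (G := G) (B := B) hT hGN hGnorm
  obtain ⟨f₀, hmin, huniq⟩ := strongly_convex_min K (G T ζ - ζ₁) lam hlam
  have trans : ∀ (u : ℝ → U), MemLp u 2 (volume.restrict (Set.Icc 0 T)) →
      ∀ f : Lp U 2 (volume.restrict (Set.Icc (0:ℝ) T)),
      u =ᵐ[volume.restrict (Set.Icc (0:ℝ) T)] ⇑f →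
      ‖(G T ζ + ∫ s in (0 : ℝ)..T, G (T - s) (B (u s))) - ζ₁‖ ^ 2
          + lam * ∫ t in Set.Icc (0 : ℝ) T, ‖u t‖ ^ 2
        = ‖(G T ζ - ζ₁) + K f‖ ^ 2 + lam * ‖f‖ ^ 2 := by
    intro u hu f hae
    have h1 : (∫ s in (0 : ℝ)..T, G (T - s) (B (u s))) = K f := by
      rw [hK f, intervalIntegral.integral_of_le hT.le, ← restrict_Icc_eq_Ioc T]
      exact integral_congr_ae (by filter_upwards [hae] with s hs; rw [hs])
    have h2 : (∫ t in Set.Icc (0 : ℝ) T, ‖u t‖ ^ 2) = ‖f‖ ^ 2 := by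
      rw [norm_sq_eq_integral f]
      exact integral_congr_ae (by filter_upwards [hae] with s hs; rw [hs])
    rw [h1, h2]
    congr 2
    abel
  refine ⟨⇑f₀, Lp.memLp f₀, fun u hu => ?_, fun u hu hcost => ?_⟩
  · rw [trans (⇑f₀) (Lp.memLp f₀) f₀ (Filter.EventuallyEq.refl _ _),
      trans u hu (hu.toLp u) hu.coeFn_toLp.symm]
    exact hmin (hu.toLp u)
  · rw [trans (⇑f₀) (Lp.memLp f₀) f₀ (Filter.EventuallyEq.refl _ _),
      trans u hu (hu.toLp u) hu.coeFn_toLp.symm] at hcost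
    have heq : hu.toLp u = f₀ := huniq (hu.toLp u) hcost
    exact hu.coeFn_toLp.symm.trans (by rw [heq])
end

section
/- Let W be a Banach space, T > 0, and let G : [0,T] → L(W) be strongly continuous with G(0) = I, G(t) compact for every t ∈ (0,T], and t ↦ G(t) operator-norm continuous on (0,T]. Then the operator I : L²([0,T];W) → C([0,T];W) defined by (I g)(t) = ∫₀ᵗ G(t−s) g(s) ds is a compact operator. -/
set_option linter.unusedSectionVars false
set_option maxHeartbeats 1000000

open MeasureTheory Set

namespace Stmt16

variable {W : Type*} [NormedAddCommGroup W] [NormedSpace ℝ W] [CompleteSpace W]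

lemma totallyBounded_of_compact_approx {s : Set W}
    (h : ∀ ε > 0, ∃ K : Set W, IsCompact K ∧ ∀ x ∈ s, ∃ y ∈ K, dist x y ≤ ε) :
    TotallyBounded s := by
  rw [Metric.totallyBounded_iff]
  intro ε hε
  obtain ⟨K, hK, hKs⟩ := h (ε / 3) (by linarith)
  obtain ⟨t, htf, hcov⟩ := (Metric.totallyBounded_iff.mp hK.totallyBounded) (ε / 3) (by linarith)
  refine ⟨t, htf, fun x hx => ?_⟩
  obtain ⟨y, hyK, hxy⟩ := hKs x hx
  obtain ⟨z, hzt, hyz⟩ := mem_iUnion₂.mp (hcov hyK)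
  exact mem_iUnion₂.mpr ⟨z, hzt, by
    have : dist x z < ε := by
      calc dist x z ≤ dist x y + dist y z := dist_triangle _ _ _
        _ < ε / 3 + ε / 3 := by
            have := Metric.mem_ball.mp hyz
            linarith
        _ < ε := by linarith
    exact Metric.mem_ball.mpr this⟩

lemma l2_l1_bound {T R : ℝ} {g : ℝ → W}
    (hg : MemLp g 2 (volume.restrict (Icc 0 T)))
    (hR : (eLpNorm g 2 (volume.restrict (Icc 0 T))).toReal ≤ R)
    {a b : ℝ} (ha : 0 ≤ a) (hb : b ≤ T) :
    ∫ s in Ioc a b, ‖g s‖ ≤ R * Real.sqrt (b - a) := by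
  have hR0 : 0 ≤ R := le_trans ENNReal.toReal_nonneg hR
  rcases le_or_gt b a with hba | hab
  · rcases eq_or_lt_of_le hba with rfl | hba'
    · simp [Real.sqrt_nonneg, mul_nonneg hR0 (Real.sqrt_nonneg _)]
    · rw [Ioc_eq_empty (by exact fun h => absurd h (not_lt.mpr hba))]
      simp [mul_nonneg hR0 (Real.sqrt_nonneg _)]
  · have hsub : Ioc a b ⊆ Icc 0 T := fun x hx => ⟨le_trans ha hx.1.le, le_trans hx.2 hb⟩
    have hνle : volume.restrict (Ioc a b) ≤ volume.restrict (Icc 0 T) :=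
      Measure.restrict_mono hsub le_rfl
    set ν := volume.restrict (Ioc a b) with hν
    have hg2 : MemLp g 2 ν := hg.mono_measure hνle
    have hgsm : AEStronglyMeasurable g ν := hg2.1
    haveI : IsFiniteMeasure ν := ⟨by
      rw [hν, Measure.restrict_apply_univ, Real.volume_Ioc]; exact ENNReal.ofReal_lt_top⟩
    have hgi : Integrable g ν := memLp_one_iff_integrable.mp
      (hg2.mono_exponent (by norm_num))
    have key : eLpNorm g 1 ν ≤ eLpNorm g 2 ν * ν univ ^ ((1 : ℝ) / 2) := by
      have := eLpNorm_le_eLpNorm_mul_rpow_measure_univ (p := 1) (q := 2)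
        (by norm_num) hgsm
      norm_num at this
      convert this using 3
    have hνuniv : ν univ = ENNReal.ofReal (b - a) := by
      rw [hν, Measure.restrict_apply_univ, Real.volume_Ioc]
    have hint : ∫ s in Ioc a b, ‖g s‖ = (eLpNorm g 1 ν).toReal := by
      rw [eLpNorm_one_eq_lintegral_enorm,
        MeasureTheory.integral_norm_eq_lintegral_enorm hgsm]
    rw [hint]
    have hfin : eLpNorm g 2 (volume.restrict (Icc 0 T)) * ENNReal.ofReal (b - a) ^ ((1:ℝ)/2) ≠ ⊤ :=
      ENNReal.mul_ne_top hg.2.ne (by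
        exact (ENNReal.rpow_lt_top_of_nonneg (by norm_num) ENNReal.ofReal_ne_top).ne)
    have key2 : eLpNorm g 1 ν ≤
        eLpNorm g 2 (volume.restrict (Icc 0 T)) * ENNReal.ofReal (b - a) ^ ((1:ℝ)/2) := by
      refine key.trans ?_
      rw [hνuniv]
      exact mul_le_mul_left (eLpNorm_mono_measure g hνle) _
    calc (eLpNorm g 1 ν).toReal
        ≤ (eLpNorm g 2 (volume.restrict (Icc 0 T)) * ENNReal.ofReal (b - a) ^ ((1:ℝ)/2)).toReal :=
          ENNReal.toReal_mono hfin key2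
      _ = (eLpNorm g 2 (volume.restrict (Icc 0 T))).toReal *
            ((ENNReal.ofReal (b - a)) ^ ((1:ℝ)/2)).toReal := ENNReal.toReal_mul
      _ ≤ R * Real.sqrt (b - a) := by
          have h1 : ((ENNReal.ofReal (b - a)) ^ ((1:ℝ)/2)).toReal = Real.sqrt (b - a) := by
            rw [← ENNReal.toReal_rpow, ENNReal.toReal_ofReal (by linarith), Real.sqrt_eq_rpow]
          rw [h1]
          exact mul_le_mul_of_nonneg_right hR (Real.sqrt_nonneg _) |>.trans
            (le_of_eq rfl)


lemma aesm_head {T : ℝ} (hT : 0 < T) {G : ℝ → W →L[ℝ] W}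
    (hGjc : ContinuousOn (fun p : ℝ × W => G p.1 p.2) (Icc 0 T ×ˢ (univ : Set W)))
    {g : ℝ → W} (hg : AEStronglyMeasurable g (volume.restrict (Icc 0 T)))
    {τ a b : ℝ} (ha : 0 ≤ a) (hb : b ≤ τ) (hτT : τ ≤ T) :
    AEStronglyMeasurable (fun s => G (τ - s) (g s)) (volume.restrict (Ioc a b)) := by
  rcases le_or_gt b a with hba | hab
  · rcases eq_or_lt_of_le hba with rfl | hba'
    · simp [aestronglyMeasurable_zero_measure]
    · rw [Ioc_eq_empty (not_lt.mpr hba)]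
      simp
  · set clamp : ℝ → ℝ := fun u => max 0 (min u T) with hclamp
    have hclamp_mem : ∀ u, clamp u ∈ Icc (0:ℝ) T :=
      fun u => ⟨le_max_left _ _, max_le hT.le (min_le_right _ _)⟩
    have hclamp_cont : Continuous clamp :=
      continuous_const.max (continuous_id.min continuous_const)
    have hsub : Ioc a b ⊆ Icc 0 T := fun x hx =>
      ⟨le_trans ha hx.1.le, le_trans hx.2 (le_trans hb hτT)⟩
    have hg' : AEStronglyMeasurable g (volume.restrict (Ioc a b)) :=
      hg.mono_measure (Measure.restrict_mono hsub le_rfl)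
    have hφ : Continuous (fun p : ℝ × W => G (clamp p.1) p.2) := by
      have := hGjc.comp_continuous
        (f := fun p : ℝ × W => ((clamp p.1, p.2) : ℝ × W))
        ((hclamp_cont.comp continuous_fst).prodMk continuous_snd)
        (fun p => ⟨hclamp_mem _, mem_univ _⟩)
      exact this
    have h0 : AEStronglyMeasurable (fun s => G (clamp (τ - s)) (g s))
        (volume.restrict (Ioc a b)) := by
      exact hφ.comp_aestronglyMeasurable
        (((continuous_const.sub continuous_id).aestronglyMeasurable).prodMk hg')
    refine h0.congr ?_
    filter_upwards [ae_restrict_mem measurableSet_Ioc] with s hs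
    have h1 : τ - s ∈ Icc (0:ℝ) T :=
      ⟨by linarith [hs.2, hb], by linarith [hs.1, ha]⟩
    rw [hclamp]
    simp only
    rw [min_eq_left h1.2, max_eq_right h1.1]

lemma integrableOn_head {T : ℝ} (hT : 0 < T) {G : ℝ → W →L[ℝ] W} {M : ℝ}
    (hM : ∀ u ∈ Icc (0:ℝ) T, ‖G u‖ ≤ M)
    (hGjc : ContinuousOn (fun p : ℝ × W => G p.1 p.2) (Icc 0 T ×ˢ (univ : Set W)))
    {g : ℝ → W} (hg : AEStronglyMeasurable g (volume.restrict (Icc 0 T)))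
    (hgi : Integrable g (volume.restrict (Icc 0 T)))
    {τ a b : ℝ} (ha : 0 ≤ a) (hb : b ≤ τ) (hτT : τ ≤ T) :
    IntegrableOn (fun s => G (τ - s) (g s)) (Ioc a b) volume := by
  rcases le_or_gt b a with hba | hab
  · rcases eq_or_lt_of_le hba with rfl | hba'
    · simp [IntegrableOn]
    · rw [IntegrableOn, Ioc_eq_empty (not_lt.mpr hba)]; simp
  · have hsub : Ioc a b ⊆ Icc 0 T := fun x hx =>
      ⟨le_trans ha hx.1.le, le_trans hx.2 (le_trans hb hτT)⟩
    have hgi' : Integrable g (volume.restrict (Ioc a b)) :=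
      hgi.mono_measure (Measure.restrict_mono hsub le_rfl)
    refine Integrable.mono' ((hgi'.norm).const_mul M)
      (aesm_head hT hGjc hg ha hb hτT) ?_
    filter_upwards [ae_restrict_mem measurableSet_Ioc] with s hs
    have h1 : τ - s ∈ Icc (0:ℝ) T :=
      ⟨by linarith [hs.2, hb], by linarith [hs.1, ha]⟩
    calc ‖G (τ - s) (g s)‖ ≤ ‖G (τ - s)‖ * ‖g s‖ := (G (τ - s)).le_opNorm _
      _ ≤ M * ‖g s‖ := mul_le_mul_of_nonneg_right (hM _ h1) (norm_nonneg _)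

/-- Generic bound for `‖∫ s in Ioc a b, A s (g s)‖` with pointwise operator norm bound `C`. -/
lemma bound_gen {T R : ℝ} {g : ℝ → W}
    (hg : MemLp g 2 (volume.restrict (Icc 0 T)))
    (hR : (eLpNorm g 2 (volume.restrict (Icc 0 T))).toReal ≤ R)
    {A : ℝ → W →L[ℝ] W} {a b C : ℝ} (hC : 0 ≤ C)
    (ha : 0 ≤ a) (hb : b ≤ T)
    (hbd : ∀ s ∈ Ioc a b, ‖A s‖ ≤ C)
    (hmeas : AEStronglyMeasurable (fun s => A s (g s)) (volume.restrict (Ioc a b))) :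
    ‖∫ s in Ioc a b, A s (g s)‖ ≤ C * (R * Real.sqrt (b - a)) := by
  have hR0 : 0 ≤ R := le_trans ENNReal.toReal_nonneg hR
  have hrhs : 0 ≤ C * (R * Real.sqrt (b - a)) := by positivity
  rcases le_or_gt b a with hba | hab
  · rcases eq_or_lt_of_le hba with rfl | hba'
    · simpa using hrhs
    · rw [Ioc_eq_empty (not_lt.mpr hba)]; simpa using hrhs
  · have hsub : Ioc a b ⊆ Icc 0 T := fun x hx =>
      ⟨le_trans ha hx.1.le, le_trans hx.2 hb⟩
    haveI : IsFiniteMeasure (volume.restrict (Icc (0:ℝ) T)) := ⟨by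
      rw [Measure.restrict_apply_univ, Real.volume_Icc]; exact ENNReal.ofReal_lt_top⟩
    have hgi : Integrable g (volume.restrict (Icc 0 T)) :=
      memLp_one_iff_integrable.mp (hg.mono_exponent (by norm_num))
    have hgi' : Integrable g (volume.restrict (Ioc a b)) :=
      hgi.mono_measure (Measure.restrict_mono hsub le_rfl)
    have hbound : ∀ᵐ s ∂(volume.restrict (Ioc a b)), ‖A s (g s)‖ ≤ C * ‖g s‖ := by
      filter_upwards [ae_restrict_mem measurableSet_Ioc] with s hs
      calc ‖A s (g s)‖ ≤ ‖A s‖ * ‖g s‖ := (A s).le_opNorm _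
        _ ≤ C * ‖g s‖ := mul_le_mul_of_nonneg_right (hbd s hs) (norm_nonneg _)
    calc ‖∫ s in Ioc a b, A s (g s)‖ ≤ ∫ s in Ioc a b, ‖A s (g s)‖ :=
          norm_integral_le_integral_norm _
      _ ≤ ∫ s in Ioc a b, C * ‖g s‖ := by
          refine integral_mono_of_nonneg ?_ (hgi'.norm.const_mul C) hbound
          · filter_upwards with s using norm_nonneg _
      _ = C * ∫ s in Ioc a b, ‖g s‖ := integral_const_mul C _
      _ ≤ C * (R * Real.sqrt (b - a)) :=
          mul_le_mul_of_nonneg_left (l2_l1_bound hg hR ha hb) hC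

/-- Same as `bound_gen` but keeping the `L¹` integral on the right-hand side. -/
lemma bound_gen' {T : ℝ} {g : ℝ → W}
    (hgi : Integrable g (volume.restrict (Icc 0 T)))
    {A : ℝ → W →L[ℝ] W} {a b C : ℝ} (hC : 0 ≤ C)
    (ha : 0 ≤ a) (hb : b ≤ T) (hab : a ≤ b)
    (hbd : ∀ s ∈ Ioc a b, ‖A s‖ ≤ C)
    (hmeas : AEStronglyMeasurable (fun s => A s (g s)) (volume.restrict (Ioc a b))) :
    ‖∫ s in Ioc a b, A s (g s)‖ ≤ C * ∫ s in Ioc a b, ‖g s‖ := by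
  have hsub : Ioc a b ⊆ Icc 0 T := fun x hx =>
    ⟨le_trans ha hx.1.le, le_trans hx.2 hb⟩
  have hgi' : Integrable g (volume.restrict (Ioc a b)) :=
    hgi.mono_measure (Measure.restrict_mono hsub le_rfl)
  have hbound : ∀ᵐ s ∂(volume.restrict (Ioc a b)), ‖A s (g s)‖ ≤ C * ‖g s‖ := by
    filter_upwards [ae_restrict_mem measurableSet_Ioc] with s hs
    calc ‖A s (g s)‖ ≤ ‖A s‖ * ‖g s‖ := (A s).le_opNorm _
      _ ≤ C * ‖g s‖ := mul_le_mul_of_nonneg_right (hbd s hs) (norm_nonneg _)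
  calc ‖∫ s in Ioc a b, A s (g s)‖ ≤ ∫ s in Ioc a b, ‖A s (g s)‖ :=
        norm_integral_le_integral_norm _
    _ ≤ ∫ s in Ioc a b, C * ‖g s‖ := by
        refine integral_mono_of_nonneg ?_ (hgi'.norm.const_mul C) hbound
        · filter_upwards with s using norm_nonneg _
    _ = C * ∫ s in Ioc a b, ‖g s‖ := integral_const_mul C _

lemma est1 {T : ℝ} (hT : 0 < T) {G : ℝ → W →L[ℝ] W} {M R' : ℝ}
    (hM : ∀ u ∈ Icc (0:ℝ) T, ‖G u‖ ≤ M) (hM0 : 0 ≤ M) (hR'0 : 0 ≤ R')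
    (hGjc : ContinuousOn (fun p : ℝ × W => G p.1 p.2) (Icc 0 T ×ˢ (univ : Set W)))
    (hmod : ∀ δ : ℝ, 0 < δ → δ ≤ T → ∀ ε' > 0, ∃ η > 0,
      ∀ u ∈ Icc δ T, ∀ v ∈ Icc δ T, |u - v| ≤ η → ‖G u - G v‖ ≤ ε')
    {ε : ℝ} (hε : 0 < ε) :
    ∃ δ > 0, ∀ g : ℝ → W, MemLp g 2 (volume.restrict (Icc 0 T)) →
      (eLpNorm g 2 (volume.restrict (Icc 0 T))).toReal ≤ R' →
      ∀ t t' : ℝ, 0 ≤ t → t ≤ t' → t' ≤ T → t' - t ≤ δ →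
      ‖(∫ s in (0:ℝ)..t', G (t' - s) (g s)) - ∫ s in (0:ℝ)..t, G (t - s) (g s)‖ ≤ ε := by
  set c := ε / (6 * (M + 1) * (R' + 1)) with hc_def
  have hc : 0 < c := by positivity
  set δ₀ := min T (c ^ 2) with hδ₀_def
  have hδ₀ : 0 < δ₀ := lt_min hT (by positivity)
  have hδ₀T : δ₀ ≤ T := min_le_left _ _
  have hsq : Real.sqrt δ₀ ≤ c := by
    calc Real.sqrt δ₀ ≤ Real.sqrt (c ^ 2) := Real.sqrt_le_sqrt (min_le_right _ _)
      _ = c := Real.sqrt_sq hc.le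
  have hceq : (M + 1) * ((R' + 1) * c) = ε / 6 := by
    rw [hc_def]; field_simp
  have hkey : M * (R' * Real.sqrt δ₀) ≤ ε / 6 := by
    have h1 : M * (R' * Real.sqrt δ₀) ≤ M * (R' * c) :=
      mul_le_mul_of_nonneg_left (mul_le_mul_of_nonneg_left hsq hR'0) hM0
    have h2 : M * (R' * c) ≤ (M + 1) * ((R' + 1) * c) := by nlinarith [hc.le]
    linarith
  set ε' := ε / (6 * (R' * Real.sqrt T + 1)) with hε'_def
  have hsqT : 0 ≤ R' * Real.sqrt T := by positivity
  have hε' : 0 < ε' := by positivity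
  have hε'eq : ε' * (R' * Real.sqrt T + 1) = ε / 6 := by
    rw [hε'_def]; field_simp
  obtain ⟨η, hη, hmodη⟩ := hmod δ₀ hδ₀ hδ₀T ε' hε'
  refine ⟨min δ₀ η, lt_min hδ₀ hη, ?_⟩
  intro g hg hR t t' ht htt' ht'T hδle
  have ht'0 : 0 ≤ t' := le_trans ht htt'
  have htT : t ≤ T := le_trans htt' ht'T
  have hgsm := hg.1
  haveI : IsFiniteMeasure (volume.restrict (Icc (0:ℝ) T)) := ⟨by
    rw [Measure.restrict_apply_univ, Real.volume_Icc]; exact ENNReal.ofReal_lt_top⟩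
  have hgi : Integrable g (volume.restrict (Icc 0 T)) :=
    memLp_one_iff_integrable.mp (hg.mono_exponent (by norm_num))
  set τ := max (t - δ₀) 0 with hτ_def
  have hτ0 : 0 ≤ τ := le_max_right _ _
  have hτt : τ ≤ t := max_le (by linarith) ht
  have key_ii : ∀ τ' u v : ℝ, 0 ≤ u → v ≤ τ' → τ' ≤ T → u ≤ v →
      IntervalIntegrable (fun s => G (τ' - s) (g s)) volume u v := by
    intro τ' u v h1 h2 h3 h4
    rw [intervalIntegrable_iff, uIoc_of_le h4]
    exact integrableOn_head hT hM hGjc hgsm hgi h1 h2 h3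
  have key_meas : ∀ τ' u v : ℝ, 0 ≤ u → v ≤ τ' → τ' ≤ T →
      AEStronglyMeasurable (fun s => G (τ' - s) (g s)) (volume.restrict (Ioc u v)) :=
    fun τ' u v h1 h2 h3 => aesm_head hT hGjc hgsm h1 h2 h3
  -- decomposition
  have hd1 : (∫ s in (0:ℝ)..t, G (t' - s) (g s)) + (∫ s in t..t', G (t' - s) (g s)) =
      ∫ s in (0:ℝ)..t', G (t' - s) (g s) :=
    intervalIntegral.integral_add_adjacent_intervals
      (key_ii t' 0 t le_rfl htt' ht'T ht)
      (key_ii t' t t' ht le_rfl ht'T htt')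
  have hiiD : ∀ u v : ℝ, 0 ≤ u → v ≤ t → u ≤ v →
      IntervalIntegrable (fun s => G (t' - s) (g s) - G (t - s) (g s)) volume u v :=
    fun u v h1 h2 h3 =>
      (key_ii t' u v h1 (le_trans h2 htt') ht'T h3).sub (key_ii t u v h1 h2 htT h3)
  have hd3 : (∫ s in (0:ℝ)..t, (G (t' - s) (g s) - G (t - s) (g s))) =
      (∫ s in (0:ℝ)..t, G (t' - s) (g s)) - ∫ s in (0:ℝ)..t, G (t - s) (g s) :=
    intervalIntegral.integral_sub (key_ii t' 0 t le_rfl htt' ht'T ht) (key_ii t 0 t le_rfl le_rfl htT ht)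
  have hd2 : (∫ s in (0:ℝ)..t, (G (t' - s) (g s) - G (t - s) (g s))) =
      (∫ s in (0:ℝ)..τ, (G (t' - s) (g s) - G (t - s) (g s))) +
      ∫ s in τ..t, (G (t' - s) (g s) - G (t - s) (g s)) :=
    (intervalIntegral.integral_add_adjacent_intervals
      (hiiD 0 τ le_rfl hτt hτ0) (hiiD τ t hτ0 le_rfl hτt)).symm
  have main_eq : (∫ s in (0:ℝ)..t', G (t' - s) (g s)) - ∫ s in (0:ℝ)..t, G (t - s) (g s) =
      (∫ s in t..t', G (t' - s) (g s)) +
      ((∫ s in (0:ℝ)..τ, (G (t' - s) (g s) - G (t - s) (g s))) +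
      ∫ s in τ..t, (G (t' - s) (g s) - G (t - s) (g s))) := by
    rw [← hd2, hd3, ← hd1]; abel
  rw [main_eq]
  -- three bounds
  have bd1 : ‖∫ s in t..t', G (t' - s) (g s)‖ ≤ ε / 6 := by
    rw [intervalIntegral.integral_of_le htt']
    have h := bound_gen (A := fun s => G (t' - s)) hg hR hM0 ht ht'T
      (fun s hs => hM _ ⟨by linarith [hs.2], by linarith [hs.1, ht]⟩)
      (key_meas t' t t' ht le_rfl ht'T)
    refine h.trans ?_
    have : Real.sqrt (t' - t) ≤ Real.sqrt δ₀ :=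
      Real.sqrt_le_sqrt (le_trans hδle (min_le_left _ _))
    calc M * (R' * Real.sqrt (t' - t)) ≤ M * (R' * Real.sqrt δ₀) := by
          exact mul_le_mul_of_nonneg_left (mul_le_mul_of_nonneg_left this hR'0) hM0
      _ ≤ ε / 6 := hkey
  have diff_meas : ∀ u v : ℝ, 0 ≤ u → v ≤ t →
      AEStronglyMeasurable (fun s => (G (t' - s) - G (t - s)) (g s))
        (volume.restrict (Ioc u v)) := by
    intro u v h1 h2
    simp only [ContinuousLinearMap.sub_apply]
    exact (key_meas t' u v h1 (le_trans h2 htt') ht'T).sub (key_meas t u v h1 h2 htT)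
  have bd3 : ‖∫ s in τ..t, (G (t' - s) (g s) - G (t - s) (g s))‖ ≤ 2 * (ε / 6) := by
    rw [intervalIntegral.integral_of_le hτt]
    have hEq : (∫ s in Ioc τ t, (G (t' - s) (g s) - G (t - s) (g s))) =
        ∫ s in Ioc τ t, (G (t' - s) - G (t - s)) (g s) := by
      simp only [ContinuousLinearMap.sub_apply]
    rw [hEq]
    have h := bound_gen (A := fun s => G (t' - s) - G (t - s)) hg hR
      (by linarith : (0:ℝ) ≤ 2 * M) hτ0 htT
      (fun s hs => by
        refine (norm_sub_le _ _).trans ?_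
        have h1 := hM (t' - s) ⟨by linarith [hs.2, htt'], by linarith [hs.1, hτ0]⟩
        have h2 := hM (t - s) ⟨by linarith [hs.2], by linarith [hs.1, hτ0]⟩
        linarith)
      (diff_meas τ t hτ0 le_rfl)
    refine h.trans ?_
    have httau : t - τ ≤ δ₀ := by
      have : t - δ₀ ≤ τ := le_max_left _ _
      linarith
    have : Real.sqrt (t - τ) ≤ Real.sqrt δ₀ := Real.sqrt_le_sqrt httau
    calc 2 * M * (R' * Real.sqrt (t - τ)) ≤ 2 * M * (R' * Real.sqrt δ₀) := by
          exact mul_le_mul_of_nonneg_left (mul_le_mul_of_nonneg_left this hR'0) (by linarith)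
      _ = 2 * (M * (R' * Real.sqrt δ₀)) := by ring
      _ ≤ 2 * (ε / 6) := by linarith
  have bd2 : ‖∫ s in (0:ℝ)..τ, (G (t' - s) (g s) - G (t - s) (g s))‖ ≤ ε / 6 := by
    rw [intervalIntegral.integral_of_le hτ0]
    have hEq : (∫ s in Ioc (0:ℝ) τ, (G (t' - s) (g s) - G (t - s) (g s))) =
        ∫ s in Ioc (0:ℝ) τ, (G (t' - s) - G (t - s)) (g s) := by
      simp only [ContinuousLinearMap.sub_apply]
    rw [hEq]
    have hbd : ∀ s ∈ Ioc (0:ℝ) τ, ‖G (t' - s) - G (t - s)‖ ≤ ε' := by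
      intro s hs
      have hτpos : 0 < τ := lt_of_lt_of_le hs.1 hs.2
      have h1 : 0 ≤ t - δ₀ := by
        by_contra h
        push_neg at h
        rw [hτ_def, max_eq_right h.le] at hτpos
        exact lt_irrefl _ hτpos
      have hτeq : τ = t - δ₀ := max_eq_left h1
      have hv : t - s ∈ Icc δ₀ T := ⟨by rw [hτeq] at hs; linarith [hs.2], by linarith [hs.1]⟩
      have hu : t' - s ∈ Icc δ₀ T := ⟨by linarith [hv.1, htt'], by linarith [hs.1, ht'T]⟩
      have habs : |t' - s - (t - s)| ≤ η := by
        rw [show t' - s - (t - s) = t' - t by ring, abs_of_nonneg (by linarith)]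
        exact le_trans hδle (min_le_right _ _)
      exact hmodη _ hu _ hv habs
    have h := bound_gen (A := fun s => G (t' - s) - G (t - s)) hg hR hε'.le le_rfl
      (le_trans hτt htT) hbd (diff_meas 0 τ le_rfl hτt)
    refine h.trans ?_
    have hsqτ : Real.sqrt (τ - 0) ≤ Real.sqrt T := by
      rw [sub_zero]; exact Real.sqrt_le_sqrt (le_trans hτt htT)
    calc ε' * (R' * Real.sqrt (τ - 0)) ≤ ε' * (R' * Real.sqrt T) := by
          exact mul_le_mul_of_nonneg_left (mul_le_mul_of_nonneg_left hsqτ hR'0) hε'.le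
      _ ≤ ε' * (R' * Real.sqrt T + 1) := by nlinarith
      _ = ε / 6 := hε'eq
  calc ‖(∫ s in t..t', G (t' - s) (g s)) +
      ((∫ s in (0:ℝ)..τ, (G (t' - s) (g s) - G (t - s) (g s))) +
      ∫ s in τ..t, (G (t' - s) (g s) - G (t - s) (g s)))‖
      ≤ ‖∫ s in t..t', G (t' - s) (g s)‖ +
        (‖∫ s in (0:ℝ)..τ, (G (t' - s) (g s) - G (t - s) (g s))‖ +
        ‖∫ s in τ..t, (G (t' - s) (g s) - G (t - s) (g s))‖) :=
        (norm_add_le _ _).trans (by gcongr; exact norm_add_le _ _)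
    _ ≤ ε / 6 + (ε / 6 + 2 * (ε / 6)) := by gcongr
    _ ≤ ε := by linarith

lemma est2 {T : ℝ} (hT : 0 < T) {G : ℝ → W →L[ℝ] W} {M R' : ℝ}
    (hM : ∀ u ∈ Icc (0:ℝ) T, ‖G u‖ ≤ M) (hM0 : 0 ≤ M) (hR'0 : 0 ≤ R')
    (hGjc : ContinuousOn (fun p : ℝ × W => G p.1 p.2) (Icc 0 T ×ˢ (univ : Set W)))
    (hmod : ∀ δ : ℝ, 0 < δ → δ ≤ T → ∀ ε' > 0, ∃ η > 0,
      ∀ u ∈ Icc δ T, ∀ v ∈ Icc δ T, |u - v| ≤ η → ‖G u - G v‖ ≤ ε')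
    (hGcpt : ∀ u ∈ Ioc (0:ℝ) T, IsCompactOperator (⇑(G u)))
    {t : ℝ} (ht0 : 0 ≤ t) (htT : t ≤ T) {ε : ℝ} (hε : 0 < ε) :
    ∃ Q : Set W, IsCompact Q ∧ ∀ g : ℝ → W, MemLp g 2 (volume.restrict (Icc 0 T)) →
      (eLpNorm g 2 (volume.restrict (Icc 0 T))).toReal ≤ R' →
      ∃ y ∈ Q, ‖(∫ s in (0:ℝ)..t, G (t - s) (g s)) - y‖ ≤ ε := by
  by_cases hsmall : M * (R' * Real.sqrt t) ≤ ε
  · refine ⟨{0}, isCompact_singleton, fun g hg hR => ⟨0, rfl, ?_⟩⟩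
    rw [sub_zero, intervalIntegral.integral_of_le ht0]
    have h := bound_gen (A := fun s => G (t - s)) hg hR hM0 le_rfl htT
      (fun s hs => hM _ ⟨by linarith [hs.2], by linarith [hs.1]⟩)
      (aesm_head hT hGjc hg.1 le_rfl le_rfl htT)
    rw [sub_zero] at h
    exact h.trans hsmall
  · push_neg at hsmall
    have htpos : 0 < t := by
      rcases lt_or_eq_of_le ht0 with h | h
      · exact h
      · exfalso; rw [← h] at hsmall; simp [Real.sqrt_zero] at hsmall; linarith
    set c := ε / (3 * (M + 1) * (R' + 1)) with hc_def
    have hc : 0 < c := by positivity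
    set δ := min t (c ^ 2) with hδ_def
    have hδpos : 0 < δ := lt_min htpos (by positivity)
    have hδt : δ ≤ t := min_le_left _ _
    have hδT : δ ≤ T := hδt.trans htT
    have hsq : Real.sqrt δ ≤ c := by
      calc Real.sqrt δ ≤ Real.sqrt (c ^ 2) := Real.sqrt_le_sqrt (min_le_right _ _)
        _ = c := Real.sqrt_sq hc.le
    have hceq : (M + 1) * ((R' + 1) * c) = ε / 3 := by
      rw [hc_def]; field_simp
    have hkey : M * (R' * Real.sqrt δ) ≤ ε / 3 := by
      have h1 : M * (R' * Real.sqrt δ) ≤ M * (R' * c) :=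
        mul_le_mul_of_nonneg_left (mul_le_mul_of_nonneg_left hsq hR'0) hM0
      have h2 : M * (R' * c) ≤ (M + 1) * ((R' + 1) * c) := by nlinarith [hc.le]
      linarith
    set ε' := ε / (3 * (R' * Real.sqrt T + 1)) with hε'_def
    have hsqT : 0 ≤ R' * Real.sqrt T := by positivity
    have hε' : 0 < ε' := by positivity
    have hε'eq : ε' * (R' * Real.sqrt T + 1) = ε / 3 := by
      rw [hε'_def]; field_simp
    obtain ⟨η, hηpos, hmodη⟩ := hmod δ hδpos hδT ε' hε'
    set τ := t - δ with hτ_def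
    have hτ0 : 0 ≤ τ := by simp [hτ_def]; linarith
    have hτt : τ ≤ t := by simp [hτ_def]; linarith
    have hτT : τ ≤ T := hτt.trans htT
    obtain ⟨n₀, hn₀⟩ := exists_nat_ge (τ / η)
    set n := n₀ + 1 with hn_def
    have hnpos : 0 < (n : ℝ) := by positivity
    have hstep : τ / n ≤ η := by
      rw [div_le_iff₀ hnpos]
      have h1 : τ / η ≤ (n : ℝ) := hn₀.trans (by exact_mod_cast Nat.le_succ n₀)
      calc τ = (τ / η) * η := by field_simp
        _ ≤ (n : ℝ) * η := mul_le_mul_of_nonneg_right h1 hηpos.le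
        _ = η * n := mul_comm _ _
    set p : ℕ → ℝ := fun i => τ * i / n with hp_def
    have hp0 : p 0 = 0 := by simp [hp_def]
    have hpn : p n = τ := by simp only [hp_def]; exact mul_div_cancel_right₀ τ hnpos.ne'
    have hpmono : ∀ i j : ℕ, i ≤ j → p i ≤ p j := by
      intro i j h
      simp only [hp_def]
      have : (i:ℝ) ≤ (j:ℝ) := by exact_mod_cast h
      gcongr
    have hpstep : ∀ i : ℕ, p (i + 1) - p i = τ / n := by
      intro i
      simp only [hp_def]
      push_cast
      field_simp
      ring
    have hple : ∀ i : ℕ, i ≤ n → p i ≤ τ := fun i hi => by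
      rw [← hpn]; exact hpmono i n hi
    have hp_nonneg : ∀ i : ℕ, 0 ≤ p i := fun i => by rw [hp_def]; positivity
    set B := R' * Real.sqrt T + 1 with hB_def
    have harg : ∀ i : ℕ, i < n → t - p i ∈ Ioc (0:ℝ) T := by
      intro i hi
      constructor
      · have := hple i hi.le; linarith [hδpos]
      · have := hp_nonneg i; linarith
    have hGi : ∀ i : Fin n, IsCompact (closure (⇑(G (t - p i)) '' Metric.closedBall 0 B)) :=
      fun i => (hGcpt (t - p i) (harg i i.2)).isCompact_closure_image_of_isVonNBounded
        (NormedSpace.isVonNBounded_closedBall ℝ W B)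
    set Q : Set W := (fun v : Fin n → W => ∑ i, v i) ''
      (Set.univ.pi fun i : Fin n => closure (⇑(G (t - p i)) '' Metric.closedBall 0 B)) with hQ_def
    have hQ : IsCompact Q := (isCompact_univ_pi hGi).image
      (continuous_finset_sum _ fun i _ => continuous_apply i)
    refine ⟨Q, hQ, fun g hg hR => ?_⟩
    have hgsm := hg.1
    haveI : IsFiniteMeasure (volume.restrict (Icc (0:ℝ) T)) := ⟨by
      rw [Measure.restrict_apply_univ, Real.volume_Icc]; exact ENNReal.ofReal_lt_top⟩
    have hgi : Integrable g (volume.restrict (Icc 0 T)) :=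
      memLp_one_iff_integrable.mp (hg.mono_exponent (by norm_num))
    have key_ii : ∀ u v : ℝ, 0 ≤ u → v ≤ t → u ≤ v →
        IntervalIntegrable (fun s => G (t - s) (g s)) volume u v := by
      intro u v h1 h2 h3
      rw [intervalIntegrable_iff, uIoc_of_le h3]
      exact integrableOn_head hT hM hGjc hgsm hgi h1 h2 htT
    have hg_ii : ∀ u v : ℝ, 0 ≤ u → v ≤ T → u ≤ v → IntervalIntegrable g volume u v := by
      intro u v h1 h2 h3
      rw [intervalIntegrable_iff, uIoc_of_le h3]
      have hsub : Ioc u v ⊆ Icc (0:ℝ) T := fun x hx =>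
        ⟨le_trans h1 hx.1.le, le_trans hx.2 h2⟩
      exact hgi.mono_measure (Measure.restrict_mono hsub le_rfl)
    -- the approximating element
    set v : ℕ → W := fun i => ∫ s in p i..p (i + 1), g s with hv_def
    have hvball : ∀ i : ℕ, i < n → v i ∈ Metric.closedBall (0:W) B := by
      intro i hi
      rw [Metric.mem_closedBall, dist_zero_right, hv_def]
      simp only
      rw [intervalIntegral.integral_of_le (by linarith [hpstep i, div_nonneg hτ0 hnpos.le])]
      calc ‖∫ s in Ioc (p i) (p (i + 1)), g s‖ ≤ ∫ s in Ioc (p i) (p (i + 1)), ‖g s‖ :=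
            norm_integral_le_integral_norm _
        _ ≤ R' * Real.sqrt (p (i + 1) - p i) :=
            l2_l1_bound hg hR (hp_nonneg i) (le_trans (hple (i+1) hi) hτT)
        _ ≤ R' * Real.sqrt T + 1 := by
            have h1 : Real.sqrt (p (i + 1) - p i) ≤ Real.sqrt T := by
              apply Real.sqrt_le_sqrt
              rw [hpstep i]
              calc τ / n ≤ τ / 1 := by
                    apply div_le_div_of_nonneg_left hτ0 ?_ ?_ <;> [skip; exact_mod_cast Nat.one_le_iff_ne_zero.mpr (by omega)] <;> norm_num
                _ = τ := div_one τ
                _ ≤ T := hτT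
            nlinarith [mul_le_mul_of_nonneg_left h1 hR'0]
        _ = B := hB_def.symm
    set y := ∑ i : Fin n, G (t - p i) (v i) with hy_def
    have hyQ : y ∈ Q := by
      rw [hQ_def]
      exact ⟨fun i => G (t - p i) (v i),
        fun i _ => subset_closure ⟨v i, hvball i i.2, rfl⟩, rfl⟩
    refine ⟨y, hyQ, ?_⟩
    -- decomposition
    have hsplit : (∫ s in (0:ℝ)..t, G (t - s) (g s)) =
        (∫ s in (0:ℝ)..τ, G (t - s) (g s)) + ∫ s in τ..t, G (t - s) (g s) :=
      (intervalIntegral.integral_add_adjacent_intervals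
        (key_ii 0 τ le_rfl hτt hτ0) (key_ii τ t hτ0 le_rfl hτt)).symm
    have hsum : (∑ i ∈ Finset.range n, ∫ s in p i..p (i + 1), G (t - s) (g s)) =
        ∫ s in (0:ℝ)..τ, G (t - s) (g s) := by
      have := intervalIntegral.sum_integral_adjacent_intervals (a := p) (n := n)
        (f := fun s => G (t - s) (g s)) (μ := volume) ?_
      · rw [hp0, hpn] at this; exact this
      · intro k hk
        exact key_ii (p k) (p (k + 1)) (hp_nonneg k)
          (le_trans (hple (k+1) hk) hτt) (hpmono k (k+1) (Nat.le_succ k))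
    have hsum_g : (∑ i ∈ Finset.range n, ∫ s in p i..p (i + 1), ‖g s‖) =
        ∫ s in (0:ℝ)..τ, ‖g s‖ := by
      have := intervalIntegral.sum_integral_adjacent_intervals (a := p) (n := n)
        (f := fun s => ‖g s‖) (μ := volume) ?_
      · rw [hp0, hpn] at this; exact this
      · intro k hk
        exact (hg_ii (p k) (p (k + 1)) (hp_nonneg k)
          (le_trans (le_trans (hple (k+1) hk) hτt) htT) (hpmono k (k+1) (Nat.le_succ k))).norm
    have hpiece : ∀ i : ℕ, i < n →
        ‖(∫ s in p i..p (i + 1), G (t - s) (g s)) - G (t - p i) (v i)‖ ≤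
          ε' * ∫ s in p i..p (i + 1), ‖g s‖ := by
      intro i hi
      have hle : p i ≤ p (i + 1) := hpmono i (i+1) (Nat.le_succ i)
      have hpi1T : p (i + 1) ≤ T := le_trans (le_trans (hple (i+1) hi) hτt) htT
      have hgii := hg_ii (p i) (p (i + 1)) (hp_nonneg i) hpi1T hle
      have h1 : G (t - p i) (v i) = ∫ s in p i..p (i + 1), G (t - p i) (g s) :=
        ((G (t - p i)).intervalIntegral_comp_comm hgii).symm
      have hLii : IntervalIntegrable (fun s => G (t - p i) (g s)) volume (p i) (p (i + 1)) := by
        rw [intervalIntegrable_iff, uIoc_of_le hle]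
        exact ((G (t - p i)).integrable_comp (by
          rw [intervalIntegrable_iff, uIoc_of_le hle] at hgii; exact hgii))
      rw [h1, ← intervalIntegral.integral_sub
        (key_ii (p i) (p (i + 1)) (hp_nonneg i) (le_trans (hple (i+1) hi) hτt) hle) hLii]
      rw [intervalIntegral.integral_of_le hle]
      have hEq : (∫ s in Ioc (p i) (p (i + 1)), (G (t - s) (g s) - G (t - p i) (g s))) =
          ∫ s in Ioc (p i) (p (i + 1)), (G (t - s) - G (t - p i)) (g s) := by
        simp only [ContinuousLinearMap.sub_apply]
      rw [hEq]
      have hbd : ∀ s ∈ Ioc (p i) (p (i + 1)), ‖G (t - s) - G (t - p i)‖ ≤ ε' := by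
        intro s hs
        have hu : t - s ∈ Icc δ T := by
          constructor
          · have h2 : s ≤ τ := le_trans hs.2 (hple (i+1) hi)
            linarith
          · have := hp_nonneg i; linarith [hs.1]
        have hv' : t - p i ∈ Icc δ T := by
          constructor
          · have h2 : p i ≤ τ := hple i hi.le
            linarith
          · have := hp_nonneg i; linarith
        have habs : |t - s - (t - p i)| ≤ η := by
          rw [show t - s - (t - p i) = -(s - p i) by ring, abs_neg,
            abs_of_nonneg (by linarith [hs.1])]
          have : s - p i ≤ p (i + 1) - p i := by linarith [hs.2]
          rw [hpstep i] at this
          exact this.trans hstep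
        exact hmodη _ hu _ hv' habs
      have hmeas : AEStronglyMeasurable (fun s => (G (t - s) - G (t - p i)) (g s))
          (volume.restrict (Ioc (p i) (p (i + 1)))) := by
        simp only [ContinuousLinearMap.sub_apply]
        refine (aesm_head hT hGjc hgsm (hp_nonneg i) (le_trans (hple (i+1) hi) hτt) htT).sub ?_
        have hsub : Ioc (p i) (p (i + 1)) ⊆ Icc (0:ℝ) T := fun x hx =>
          ⟨le_trans (hp_nonneg i) hx.1.le, le_trans hx.2 hpi1T⟩
        exact (G (t - p i)).continuous.comp_aestronglyMeasurable
          (hgsm.mono_measure (Measure.restrict_mono hsub le_rfl))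
      have := bound_gen' hgi hε'.le (hp_nonneg i) hpi1T hle hbd hmeas
      rwa [intervalIntegral.integral_of_le hle]
    -- assemble
    have hmain : ‖(∫ s in (0:ℝ)..τ, G (t - s) (g s)) - y‖ ≤ ε / 3 := by
      rw [← hsum, hy_def, Fin.sum_univ_eq_sum_range (fun i => G (t - p i) (v i)) n,
        ← Finset.sum_sub_distrib]
      calc ‖∑ i ∈ Finset.range n,
            ((∫ s in p i..p (i + 1), G (t - s) (g s)) - G (t - p i) (v i))‖
          ≤ ∑ i ∈ Finset.range n,
            ‖(∫ s in p i..p (i + 1), G (t - s) (g s)) - G (t - p i) (v i)‖ :=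
            norm_sum_le _ _
        _ ≤ ∑ i ∈ Finset.range n, ε' * ∫ s in p i..p (i + 1), ‖g s‖ := by
            apply Finset.sum_le_sum
            intro i hi
            exact hpiece i (Finset.mem_range.mp hi)
        _ = ε' * ∑ i ∈ Finset.range n, ∫ s in p i..p (i + 1), ‖g s‖ := by
            rw [Finset.mul_sum]
        _ = ε' * ∫ s in (0:ℝ)..τ, ‖g s‖ := by rw [hsum_g]
        _ ≤ ε' * (R' * Real.sqrt T) := by
            apply mul_le_mul_of_nonneg_left ?_ hε'.le
            rw [intervalIntegral.integral_of_le hτ0]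
            calc (∫ s in Ioc (0:ℝ) τ, ‖g s‖) ≤ R' * Real.sqrt (τ - 0) :=
                  l2_l1_bound hg hR le_rfl hτT
              _ ≤ R' * Real.sqrt T := by
                  apply mul_le_mul_of_nonneg_left ?_ hR'0
                  apply Real.sqrt_le_sqrt
                  linarith
        _ ≤ ε / 3 := by nlinarith [hε'eq, hε'.le]
    have htail : ‖∫ s in τ..t, G (t - s) (g s)‖ ≤ ε / 3 := by
      rw [intervalIntegral.integral_of_le hτt]
      have h := bound_gen (A := fun s => G (t - s)) hg hR hM0 hτ0 htT
        (fun s hs => hM _ ⟨by linarith [hs.2], by linarith [hs.1, hτ0]⟩)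
        (aesm_head hT hGjc hgsm hτ0 le_rfl htT)
      refine h.trans ?_
      have : t - τ = δ := by rw [hτ_def]; ring
      rw [this]
      exact hkey
    calc ‖(∫ s in (0:ℝ)..t, G (t - s) (g s)) - y‖
        = ‖((∫ s in (0:ℝ)..τ, G (t - s) (g s)) - y) + ∫ s in τ..t, G (t - s) (g s)‖ := by
          rw [hsplit]; congr 1; abel
      _ ≤ ‖(∫ s in (0:ℝ)..τ, G (t - s) (g s)) - y‖ + ‖∫ s in τ..t, G (t - s) (g s)‖ :=
          norm_add_le _ _
      _ ≤ ε / 3 + ε / 3 := by gcongr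
      _ ≤ ε := by linarith

end Stmt16

open Stmt16

/-- the operator `(I g)(t) = ∫₀ᵗ G(t-s) g(s) ds` from `L²([0,T];W)` to
`C([0,T];W)` is compact: it maps bounded sets of `L²` into relatively compact subsets of
`C([0,T];W)`. -/
theorem stmt_16 {W : Type*}
    [NormedAddCommGroup W] [NormedSpace ℝ W] [CompleteSpace W]
    (T : ℝ) (hT : 0 < T)
    (G : ℝ → W →L[ℝ] W)
    (hGsc : ∀ w : W, ContinuousOn (fun t : ℝ => G t w) (Set.Icc 0 T))
    (hG0 : G 0 = 1)
    (hGcpt : ∀ t ∈ Set.Ioc (0 : ℝ) T, IsCompactOperator (⇑(G t)))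
    (hGnorm : ContinuousOn G (Set.Ioc 0 T)) :
    ∀ R : ℝ, IsCompact (closure {F : C(Set.Icc (0 : ℝ) T, W) |
      ∃ g : ℝ → W, MemLp g 2 (volume.restrict (Set.Icc 0 T)) ∧
        (eLpNorm g 2 (volume.restrict (Set.Icc (0 : ℝ) T))).toReal ≤ R ∧
        ∀ t : Set.Icc (0 : ℝ) T,
          F t = ∫ s in (0 : ℝ)..(t : ℝ), G ((t : ℝ) - s) (g s)}) := by
  intro R
  classical
  -- uniform bound on the operator norms via Banach–Steinhaus
  obtain ⟨M, hM'⟩ : ∃ M, ∀ u : Set.Icc (0:ℝ) T, ‖G u‖ ≤ M := by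
    apply banach_steinhaus (g := fun u : Set.Icc (0:ℝ) T => G u)
    intro w
    obtain ⟨C, hC⟩ := (isCompact_Icc (a := (0:ℝ)) (b := T)).exists_bound_of_continuousOn (hGsc w)
    exact ⟨C, fun i => hC i i.2⟩
  have hM : ∀ u ∈ Icc (0:ℝ) T, ‖G u‖ ≤ M := fun u hu => hM' ⟨u, hu⟩
  have hM0 : 0 ≤ M := le_trans (norm_nonneg _) (hM 0 ⟨le_rfl, hT.le⟩)
  -- joint continuity
  have hGjc : ContinuousOn (fun p : ℝ × W => G p.1 p.2) (Icc 0 T ×ˢ (univ : Set W)) := by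
    rintro ⟨u₀, w₀⟩ ⟨hu₀, -⟩
    have h1 : ContinuousWithinAt (fun u : ℝ => G u w₀) (Icc 0 T) u₀ := hGsc w₀ u₀ hu₀
    rw [Metric.continuousWithinAt_iff] at h1 ⊢
    intro ε hε
    obtain ⟨δ₁, hδ₁, h1⟩ := h1 (ε/2) (by linarith)
    refine ⟨min δ₁ (ε/(2*(M+1))), lt_min hδ₁ (by positivity), ?_⟩
    rintro ⟨u, w⟩ ⟨hu, -⟩ hd
    rw [Prod.dist_eq] at hd
    have hdu : dist u u₀ < δ₁ :=
      lt_of_le_of_lt (le_max_left _ (dist w w₀)) (lt_of_lt_of_le hd (min_le_left _ _))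
    have hdw : dist w w₀ < ε/(2*(M+1)) :=
      lt_of_le_of_lt (le_max_right (dist u u₀) _) (lt_of_lt_of_le hd (min_le_right _ _))
    calc dist (G u w) (G u₀ w₀)
        ≤ dist (G u w) (G u w₀) + dist (G u w₀) (G u₀ w₀) := dist_triangle _ _ _
      _ < ε/2 + ε/2 := by
          apply add_lt_add_of_le_of_lt
          · rw [dist_eq_norm, ← map_sub]
            have hq : (0:ℝ) ≤ ε/(2*(M+1)) := by positivity
            have heq : (M+1) * (ε/(2*(M+1))) = ε/2 := by field_simp
            calc ‖G u (w - w₀)‖ ≤ ‖G u‖ * ‖w - w₀‖ := (G u).le_opNorm _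
              _ ≤ M * ‖w - w₀‖ := mul_le_mul_of_nonneg_right (hM u hu) (norm_nonneg _)
              _ ≤ M * (ε/(2*(M+1))) := by
                  rw [← dist_eq_norm]
                  exact mul_le_mul_of_nonneg_left hdw.le hM0
              _ ≤ (M+1) * (ε/(2*(M+1))) := mul_le_mul_of_nonneg_right (by linarith) hq
              _ = ε/2 := heq
          · exact h1 hu hdu
      _ = ε := by ring
  -- uniform continuity modulus away from 0
  have hmod : ∀ δ : ℝ, 0 < δ → δ ≤ T → ∀ ε' > 0, ∃ η > 0,
      ∀ u ∈ Icc δ T, ∀ v ∈ Icc δ T, |u - v| ≤ η → ‖G u - G v‖ ≤ ε' := by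
    intro δ hδ hδT ε' hε'
    have hc : ContinuousOn G (Icc δ T) :=
      hGnorm.mono (fun x hx => ⟨lt_of_lt_of_le hδ hx.1, hx.2⟩)
    have hu := isCompact_Icc.uniformContinuousOn_of_continuous hc
    rw [Metric.uniformContinuousOn_iff] at hu
    obtain ⟨η, hη, h⟩ := hu ε' hε'
    refine ⟨η/2, by linarith, fun u hu' v hv' huv => ?_⟩
    have h2 := h u hu' v hv' (by rw [Real.dist_eq]; linarith)
    rw [dist_eq_norm] at h2
    exact h2.le
  set R' := max R 0 with hR'def
  have hR'0 : 0 ≤ R' := le_max_right _ _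
  set S := {F : C(Set.Icc (0 : ℝ) T, W) |
      ∃ g : ℝ → W, MemLp g 2 (volume.restrict (Set.Icc 0 T)) ∧
        (eLpNorm g 2 (volume.restrict (Set.Icc (0 : ℝ) T))).toReal ≤ R ∧
        ∀ t : Set.Icc (0 : ℝ) T,
          F t = ∫ s in (0 : ℝ)..(t : ℝ), G ((t : ℝ) - s) (g s)} with hSdef
  haveI : CompactSpace ↥(Set.Icc (0:ℝ) T) := isCompact_iff_compactSpace.mp isCompact_Icc
  -- the closed embedding of C(X, W) into the uniform-on-compacts function space
  have F_clemb : Topology.IsClosedEmbedding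
      (UniformOnFun.ofFun {K : Set ↥(Set.Icc (0:ℝ) T) | IsCompact K} ∘
        (fun F : C(↥(Set.Icc (0:ℝ) T), W) => ⇑F)) := by
    refine ⟨ContinuousMap.isUniformEmbedding_toUniformOnFunIsCompact.isEmbedding, ?_⟩
    have h2 : IsClosed (Set.range
        (ContinuousMap.toUniformOnFunIsCompact (α := ↥(Set.Icc (0:ℝ) T)) (β := W))) := by
      rw [ContinuousMap.range_toUniformOnFunIsCompact]
      exact UniformOnFun.isClosed_setOfPred_continuous
        CompactlyCoherentSpace.isCoherentWith
    exact h2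
  -- equicontinuity
  have equi : UniformEquicontinuous
      (fun (F : ↥S) (x : ↥(Set.Icc (0:ℝ) T)) => (F : C(↥(Set.Icc (0:ℝ) T), W)) x) := by
    rw [Metric.uniformEquicontinuous_iff]
    intro ε hε
    obtain ⟨δ, hδ, hest⟩ := est1 hT hM hM0 hR'0 hGjc hmod (half_pos hε)
    refine ⟨δ, hδ, fun x y hxy F => ?_⟩
    obtain ⟨g, hg, hRg, hFval⟩ := F.2
    have hRg' : (eLpNorm g 2 (volume.restrict (Icc 0 T))).toReal ≤ R' :=
      le_trans hRg (le_max_left _ _)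
    have hxy' : dist (x:ℝ) (y:ℝ) < δ := by rwa [← Subtype.dist_eq]
    rcases le_total (x:ℝ) (y:ℝ) with h | h
    · rw [dist_eq_norm, norm_sub_rev, hFval x, hFval y]
      have := hest g hg hRg' x y x.2.1 h y.2.2
        (by rw [Real.dist_eq, abs_sub_comm, abs_of_nonneg (by linarith)] at hxy'; linarith)
      exact lt_of_le_of_lt this (half_lt_self hε)
    · rw [dist_eq_norm, hFval x, hFval y]
      have := hest g hg hRg' y x y.2.1 h x.2.2
        (by rw [Real.dist_eq, abs_of_nonneg (by linarith)] at hxy'; linarith)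
      exact lt_of_le_of_lt this (half_lt_self hε)
  have s_eqcont : ∀ K ∈ {K : Set ↥(Set.Icc (0:ℝ) T) | IsCompact K},
      EquicontinuousOn ((fun F : C(↥(Set.Icc (0:ℝ) T), W) => ⇑F) ∘ ((↑) : ↥S → _)) K :=
    fun K _ => equi.equicontinuous.equicontinuousOn K
  -- pointwise relative compactness
  have s_ptcpt : ∀ K ∈ {K : Set ↥(Set.Icc (0:ℝ) T) | IsCompact K}, ∀ x ∈ K,
      ∃ Q, IsCompact Q ∧ ∀ F ∈ S, (fun F : C(↥(Set.Icc (0:ℝ) T), W) => ⇑F) F x ∈ Q := by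
    intro K _ x _
    have htb : TotallyBounded {w : W | ∃ F ∈ S, F x = w} := by
      apply totallyBounded_of_compact_approx
      intro ε hε
      obtain ⟨Q, hQc, hQ⟩ := est2 hT hM hM0 hR'0 hGjc hmod hGcpt x.2.1 x.2.2 hε
      refine ⟨Q, hQc, ?_⟩
      rintro w ⟨F, hFS, rfl⟩
      obtain ⟨g, hg, hRg, hFval⟩ := hFS
      obtain ⟨y, hyQ, hy⟩ := hQ g hg (le_trans hRg (le_max_left _ _))
      refine ⟨y, hyQ, ?_⟩
      rw [hFval x, dist_eq_norm]
      exact hy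
    exact ⟨closure {w : W | ∃ F ∈ S, F x = w},
      htb.closure.isCompact_of_isClosed isClosed_closure,
      fun F hF => subset_closure ⟨F, hF, rfl⟩⟩
  exact ArzelaAscoli.isCompact_closure_of_isClosedEmbedding
    (fun K hK => hK) F_clemb s_eqcont s_ptcpt
end

section
/- Let W be a Banach space, T > 0, and let G : [0,T] → L(W) be strongly continuous with G(0) = I, G(t) compact for every t ∈ (0,T], and t ↦ G(t) operator-norm continuous on (0,T]. Define 𝒢 : L¹([0,T];W) → C([0,T];W) by (𝒢 g)(t) = ∫₀ᵗ G(t−s) g(s) ds. If (gₙ)ₙ ⊂ L¹([0,T];W) is integrably bounded (there exists φ ∈ L¹([0,T];ℝ₊) with ‖gₙ(t)‖_W ≤ φ(t) for a.e. t and all n) and gₙ ⇀ g weakly in L¹([0,T];W) as n → ∞, then 𝒢 gₙ → 𝒢 g strongly in C([0,T];W), i.e., sup_{t∈[0,T]} ‖(𝒢 gₙ)(t) − (𝒢 g)(t)‖_W → 0 as n → ∞. -/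
open MeasureTheory Set Filter
open Metric Topology ENNReal NNReal Pointwise

section AuxStmt18

set_option linter.unusedSectionVars false
set_option linter.unusedVariables false
open MeasureTheory Set Filter Metric Topology ENNReal NNReal Pointwise
variable {W : Type*} [NormedAddCommGroup W] [NormedSpace ℝ W]

lemma aux_joint_cont (H : ℝ → W →L[ℝ] W) (M : ℝ) (hb : ∀ τ, ‖H τ‖ ≤ M)
    (hc : ∀ w : W, Continuous fun τ => H τ w) :
    Continuous fun p : ℝ × W => H p.1 p.2 := by
  rw [Metric.continuous_iff]
  rintro ⟨τ₀, w₀⟩ ε hε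
  have hM0 : 0 ≤ M := le_trans (norm_nonneg _) (hb 0)
  obtain ⟨δ₁, hδ₁pos, hδ₁⟩ := Metric.continuous_iff.mp (hc w₀) τ₀ (ε/2) (by positivity)
  refine ⟨min δ₁ (ε / (2 * (M + 1))), by positivity, ?_⟩
  rintro ⟨τ, w⟩ hd
  simp only [Prod.dist_eq, max_lt_iff, lt_min_iff] at hd
  have key : dist (H τ w) (H τ w₀) ≤ M * dist w w₀ := by
    rw [dist_eq_norm, dist_eq_norm, ← map_sub]
    exact le_trans ((H τ).le_opNorm _) (mul_le_mul_of_nonneg_right (hb τ) (norm_nonneg _))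
  have h1 : M * dist w w₀ ≤ M * (ε / (2 * (M + 1))) :=
    mul_le_mul_of_nonneg_left (le_of_lt hd.2.2) hM0
  have h2 : dist (H τ w₀) (H τ₀ w₀) < ε/2 := hδ₁ τ hd.1.1
  have h3 : M * (ε / (2 * (M + 1))) ≤ ε / 2 := by
    rw [← mul_div_assoc, div_le_div_iff₀ (by positivity) two_pos]
    nlinarith
  calc dist (H τ w) (H τ₀ w₀) ≤ dist (H τ w) (H τ w₀) + dist (H τ w₀) (H τ₀ w₀) :=
        dist_triangle _ _ _
    _ < M * (ε / (2 * (M + 1))) + ε/2 := add_lt_add_of_le_of_lt (key.trans h1) h2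
    _ ≤ ε/2 + ε/2 := by linarith
    _ = ε := by ring

lemma aux_weak_norm {x : ℕ → W} {C : Set W} (hC : IsCompact C) (hx : ∀ n, x n ∈ C)
    (hw : ∀ f : W →L[ℝ] ℝ, Tendsto (fun n => f (x n)) atTop (𝓝 0)) :
    Tendsto x atTop (𝓝 0) := by
  apply tendsto_of_subseq_tendsto
  intro ns hns
  obtain ⟨y, hyC, ms, hms, hlim⟩ := hC.tendsto_subseq (fun n => hx (ns n))
  have hy0 : y = 0 := by
    apply NormedSpace.eq_zero_of_forall_dual_eq_zero ℝ
    intro f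
    have h1 : Tendsto (fun n => f (x (ns (ms n)))) atTop (𝓝 (f y)) :=
      (f.continuous.tendsto y).comp hlim
    have h2 : Tendsto (fun n => f (x (ns (ms n)))) atTop (𝓝 0) :=
      (hw f).comp (hns.comp hms.tendsto_atTop)
    exact tendsto_nhds_unique h1 h2
  exact ⟨ms, by rw [hy0] at hlim; exact hlim⟩

lemma aux_tb {K : Set W} (h : ∀ ε > (0:ℝ), ∃ S : Set W, IsCompact S ∧
    ∀ x ∈ K, ∃ y ∈ S, dist x y < ε) : TotallyBounded K := by
  rw [Metric.totallyBounded_iff]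
  intro ε hε
  obtain ⟨S, hS, hnear⟩ := h (ε/2) (by positivity)
  obtain ⟨t, hfin, hcover⟩ := Metric.totallyBounded_iff.mp hS.totallyBounded (ε/2) (by positivity)
  refine ⟨t, hfin, fun x hx => ?_⟩
  obtain ⟨y, hyS, hxy⟩ := hnear x hx
  obtain ⟨z, hz, hyz⟩ := by simpa only [mem_iUnion, exists_prop, mem_ball] using hcover hyS
  simp only [mem_iUnion, exists_prop, mem_ball]
  exact ⟨z, hz, lt_of_le_of_lt (dist_triangle x y z) (by linarith)⟩

lemma aux_bound [CompleteSpace W] (T : ℝ) (G : ℝ → W →L[ℝ] W)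
    (hGsc : ∀ w : W, ContinuousOn (fun t : ℝ => G t w) (Icc 0 T)) :
    ∃ M : ℝ, 1 ≤ M ∧ ∀ τ ∈ Icc (0:ℝ) T, ‖G τ‖ ≤ M := by
  have h : ∀ w : W, ∃ C, ∀ τ : Icc (0:ℝ) T, ‖G (τ : ℝ) w‖ ≤ C := by
    intro w
    obtain ⟨C, hC⟩ := (isCompact_Icc (a := (0:ℝ)) (b := T)).exists_bound_of_continuousOn (hGsc w)
    exact ⟨C, fun τ => hC τ τ.2⟩
  obtain ⟨C', hC'⟩ := banach_steinhaus (g := fun τ : Icc (0:ℝ) T => G (τ : ℝ)) h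
  exact ⟨max C' 1, le_max_right _ _, fun τ hτ => le_trans (hC' ⟨τ, hτ⟩) (le_max_left _ _)⟩

lemma aux_functional [CompleteSpace W] (μ : Measure ℝ) (k : ℝ → W →L[ℝ] ℝ) (C : ℝ) (hC : 0 ≤ C)
    (hbound : ∀ s, ‖k s‖ ≤ C)
    (hmeas : ∀ f : ℝ → W, AEStronglyMeasurable f μ →
      AEStronglyMeasurable (fun s => k s (f s)) μ) :
    ∃ Φ : (Lp W 1 μ) →L[ℝ] ℝ, ∀ (f : ℝ → W) (hf : MemLp f 1 μ),
      Φ (hf.toLp f) = ∫ s, k s (f s) ∂μ := by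
  have hint : ∀ f : Lp W 1 μ, Integrable (fun s => k s (f s)) μ := by
    intro f
    have hfi : Integrable (⇑f) μ := L1.integrable_coeFn f
    refine (hfi.norm.const_mul C).mono' (hmeas f (Lp.aestronglyMeasurable f)) ?_
    refine Eventually.of_forall fun s => ?_
    calc ‖k s (f s)‖ ≤ ‖k s‖ * ‖f s‖ := (k s).le_opNorm _
      _ ≤ C * ‖f s‖ := mul_le_mul_of_nonneg_right (hbound s) (norm_nonneg _)
  set V : Lp W 1 μ →ₗ[ℝ] ℝ :=
    { toFun := fun f => ∫ s, k s (f s) ∂μ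
      map_add' := by
        intro f g
        rw [← integral_add (hint f) (hint g)]
        refine integral_congr_ae ?_
        filter_upwards [Lp.coeFn_add f g] with s hs
        rw [hs]
        simp
      map_smul' := by
        intro c f
        rw [RingHom.id_apply, ← integral_smul]
        refine integral_congr_ae ?_
        filter_upwards [Lp.coeFn_smul c f] with s hs
        rw [hs]
        simp } with hV
  have hVb : ∀ f : Lp W 1 μ, ‖V f‖ ≤ C * ‖f‖ := by
    intro f
    have hb2 : ∀ s, ‖k s (f s)‖ ≤ C * ‖f s‖ := fun s =>
      le_trans ((k s).le_opNorm _) (mul_le_mul_of_nonneg_right (hbound s) (norm_nonneg _))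
    calc ‖V f‖ ≤ ∫ s, ‖k s (f s)‖ ∂μ := norm_integral_le_integral_norm _
      _ ≤ ∫ s, C * ‖f s‖ ∂μ := by
          refine integral_mono_of_nonneg (Eventually.of_forall fun s => norm_nonneg _)
            ((L1.integrable_coeFn f).norm.const_mul C) (Eventually.of_forall hb2)
      _ = C * ∫ s, ‖f s‖ ∂μ := by
          rw [show (fun s => C * ‖f s‖) = fun s => C • ‖f s‖ from rfl, integral_smul, smul_eq_mul]
      _ = C * ‖f‖ := by rw [L1.norm_eq_integral_norm]
  refine ⟨V.mkContinuous C hVb, ?_⟩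
  intro f hf
  show V (hf.toLp f) = _
  refine integral_congr_ae ?_
  filter_upwards [hf.coeFn_toLp] with s hs
  rw [hs]

lemma aux_abscont (μ : Measure ℝ) (ψ : ℝ → ℝ) (hψ : Integrable ψ μ) (hψ0 : ∀ s, 0 ≤ ψ s)
    {ε : ℝ} (hε : 0 < ε) :
    ∃ η > (0:ℝ), ∀ A : Set ℝ, MeasurableSet A → μ A ≤ ENNReal.ofReal η →
      ∫ s in A, ψ s ∂μ ≤ ε := by
  have hlint : ∫⁻ s, ENNReal.ofReal (ψ s) ∂μ ≠ ∞ := by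
    rw [← ofReal_integral_eq_lintegral_ofReal hψ (Eventually.of_forall hψ0)]
    exact ENNReal.ofReal_ne_top
  obtain ⟨δ, hδ0, hδ⟩ := exists_pos_setLIntegral_lt_of_measure_lt hlint
      (ENNReal.ofReal_pos.mpr hε).ne'
  obtain ⟨η, hη0', hη1, hη2⟩ := ENNReal.lt_iff_exists_real_btwn.mp hδ0
  refine ⟨η, ENNReal.ofReal_pos.mp hη1, fun A hA hAle => ?_⟩
  have h2 : ENNReal.ofReal (∫ s in A, ψ s ∂μ) = ∫⁻ s in A, ENNReal.ofReal (ψ s) ∂μ :=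
    ofReal_integral_eq_lintegral_ofReal (hψ.restrict) (Eventually.of_forall hψ0)
  have h1 : ENNReal.ofReal (∫ s in A, ψ s ∂μ) < ENNReal.ofReal ε := by
    rw [h2]; exact hδ A (lt_of_le_of_lt hAle hη2)
  exact le_of_lt ((ENNReal.ofReal_lt_ofReal_iff hε).mp h1)

lemma aux_comp_meas (μ : Measure ℝ) (H : ℝ → W →L[ℝ] W)
    (hHcont : Continuous fun p : ℝ × W => H p.1 p.2) {u : ℝ → W}
    (hu : AEStronglyMeasurable u μ) (t : ℝ) :
    AEStronglyMeasurable (fun s => H (t - s) (u s)) μ := by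
  have h1 : AEStronglyMeasurable (fun s : ℝ => ((t - s : ℝ), u s)) μ :=
    (measurable_const.sub measurable_id).aestronglyMeasurable.prodMk hu
  exact hHcont.comp_aestronglyMeasurable h1

lemma aux_comp_int (μ : Measure ℝ) (H : ℝ → W →L[ℝ] W) (M : ℝ)
    (hHb : ∀ τ, ‖H τ‖ ≤ M)
    (hHcont : Continuous fun p : ℝ × W => H p.1 p.2) {u : ℝ → W}
    (hu : Integrable u μ) (t : ℝ) :
    Integrable (fun s => H (t - s) (u s)) μ := by
  refine (hu.norm.const_mul M).mono' (aux_comp_meas μ H hHcont hu.aestronglyMeasurable t) ?_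
  exact Eventually.of_forall fun s => le_trans ((H (t-s)).le_opNorm _)
    (mul_le_mul_of_nonneg_right (hHb _) (norm_nonneg _))

lemma aux_compact [CompleteSpace W] (T δ : ℝ) (hδ : 0 < δ) (hδT : δ ≤ T)
    (G : ℝ → W →L[ℝ] W)
    (hGnorm : ContinuousOn G (Ioc 0 T))
    (hGcpt : ∀ t ∈ Ioc (0:ℝ) T, IsCompactOperator (⇑(G t))) :
    ∃ D : Set W, IsCompact D ∧ Convex ℝ D ∧ IsClosed D ∧ (0:W) ∈ D ∧
      ∀ τ ∈ Icc δ T, ∀ w ∈ closedBall (0:W) 1, G τ w ∈ D := by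
  classical
  set K₀ : Set W := ⋃ τ ∈ Icc δ T, (G τ) '' closedBall 0 1 with hK₀
  have hsub : Icc δ T ⊆ Ioc 0 T := fun x hx => ⟨lt_of_lt_of_le hδ hx.1, hx.2⟩
  have htb : TotallyBounded K₀ := by
    apply aux_tb
    intro ε hε
    have huc : UniformContinuousOn G (Icc δ T) :=
      isCompact_Icc.uniformContinuousOn_of_continuous (hGnorm.mono hsub)
    obtain ⟨r, hr0, hr⟩ := Metric.uniformContinuousOn_iff.mp huc ε hε
    obtain ⟨tt, hts, htfin, hcov⟩ := isCompact_Icc.elim_finite_subcover_image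
      (fun (i : ℝ) (_ : i ∈ Icc δ T) => isOpen_ball (x := i) (ε := r))
      (fun x hx => mem_biUnion hx (mem_ball_self hr0))
    have hKex : ∀ i ∈ tt, ∃ K : Set W, IsCompact K ∧ (G i) '' closedBall 0 1 ⊆ K := by
      intro i hi
      exact (hGcpt i (hsub (hts hi))).image_closedBall_subset_compact (𝕜₁ := ℝ)
        (f := (G i : W →ₗ[ℝ] W)) 1
    choose! K hK1 hK2 using hKex
    refine ⟨⋃ i ∈ tt, K i, htfin.isCompact_biUnion hK1, ?_⟩
    rintro x hx
    simp only [hK₀, mem_iUnion, exists_prop] at hx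
    obtain ⟨τ, hτ, w, hw, rfl⟩ := hx
    obtain ⟨i, hi, hτi⟩ : ∃ i ∈ tt, τ ∈ ball i r := by
      have := hcov hτ
      simpa only [mem_iUnion, exists_prop] using this
    refine ⟨G i w, mem_biUnion hi (hK2 i hi ⟨w, hw, rfl⟩), ?_⟩
    have hd : dist (G τ) (G i) < ε := hr τ hτ i (hts hi) (mem_ball.mp hτi)
    calc dist (G τ w) (G i w) = ‖(G τ - G i) w‖ := by
          rw [dist_eq_norm]; simp
      _ ≤ ‖G τ - G i‖ * ‖w‖ := (G τ - G i).le_opNorm w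
      _ ≤ ‖G τ - G i‖ * 1 := by
          refine mul_le_mul_of_nonneg_left ?_ (norm_nonneg _)
          simpa [mem_closedBall, dist_eq_norm] using hw
      _ = dist (G τ) (G i) := by rw [mul_one, dist_eq_norm]
      _ < ε := hd
  set D : Set W := closure (convexHull ℝ (insert 0 K₀)) with hD
  refine ⟨D, ?_, (convex_convexHull ℝ _).closure, isClosed_closure,
    subset_closure (subset_convexHull ℝ _ (mem_insert (0:W) K₀)), ?_⟩
  · apply TotallyBounded.isCompact_of_isClosed
    · exact (totallyBounded_convexHull.mpr ((totallyBounded_insert 0).mpr htb)).closure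
    · exact isClosed_closure
  · intro τ hτ w hw
    apply subset_closure
    apply subset_convexHull
    apply mem_insert_of_mem
    exact mem_biUnion hτ ⟨w, hw, rfl⟩

lemma aux_integral_mem [CompleteSpace W] (μ : Measure ℝ)
    (ψ₁ : ℝ → ℝ) (hψ₁m : Measurable ψ₁) (hψ₁1 : ∀ s, 1 ≤ ψ₁ s) (hψ₁i : Integrable ψ₁ μ)
    (c₁ : ℝ) (hc₁ : c₁ = ∫ s, ψ₁ s ∂μ) (hc₁pos : 0 < c₁)
    (D : Set W) (hDcx : Convex ℝ D) (hDcl : IsClosed D) (hD0 : (0:W) ∈ D)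
    (F : ℝ → W) (hFi : Integrable F μ) (A : Set ℝ) (hA : MeasurableSet A)
    (hmem : ∀ᵐ s ∂μ, s ∈ A → (ψ₁ s)⁻¹ • F s ∈ D) :
    ∫ s in A, F s ∂μ ∈ c₁ • D := by
  have hψ₁pos : ∀ s, 0 < ψ₁ s := fun s => lt_of_lt_of_le one_pos (hψ₁1 s)
  set w : ℝ → ℝ≥0 := fun s => (ψ₁ s).toNNReal with hw
  have hwm : Measurable w := hψ₁m.real_toNNReal
  have hwcoe : ∀ s, ((w s : ℝ)) = ψ₁ s := fun s => Real.coe_toNNReal _ (hψ₁pos s).le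
  set mw : Measure ℝ := μ.withDensity (fun s => (w s : ℝ≥0∞)) with hmw
  set ν : Measure ℝ := (ENNReal.ofReal c₁)⁻¹ • mw with hν
  set q : ℝ → W := A.indicator (fun s => (ψ₁ s)⁻¹ • F s) with hq
  have hsmul_eq : ∀ s, w s • q s = A.indicator F s := by
    intro s
    by_cases hs : s ∈ A
    · simp only [hq, indicator_of_mem hs]
      rw [NNReal.smul_def, hwcoe, smul_smul, mul_inv_cancel₀ (hψ₁pos s).ne', one_smul]
    · simp [hq, indicator_of_notMem hs]
  have hqmw : Integrable q mw := by
    rw [hmw, integrable_withDensity_iff_integrable_smul hwm]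
    exact (hFi.indicator hA).congr (Eventually.of_forall fun s => (hsmul_eq s).symm)
  have hofc₁ : ENNReal.ofReal c₁ ≠ 0 := (ENNReal.ofReal_pos.mpr hc₁pos).ne'
  have hqν : Integrable q ν := hqmw.smul_measure (by simp [hofc₁])
  have hmassmw : mw univ = ENNReal.ofReal c₁ := by
    rw [hmw, withDensity_apply _ MeasurableSet.univ, Measure.restrict_univ]
    have : ∫⁻ s, ((w s : ℝ≥0∞)) ∂μ = ∫⁻ s, ENNReal.ofReal (ψ₁ s) ∂μ := by
      refine lintegral_congr fun s => ?_
      rw [ENNReal.ofReal, hw]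
    rw [this, ← ofReal_integral_eq_lintegral_ofReal hψ₁i
      (Eventually.of_forall fun s => (hψ₁pos s).le), hc₁]
  haveI : IsProbabilityMeasure ν := by
    constructor
    rw [hν, Measure.smul_apply, hmassmw, smul_eq_mul,
      ENNReal.inv_mul_cancel hofc₁ ENNReal.ofReal_ne_top]
  have hmemν : ∀ᵐ s ∂ν, q s ∈ D := by
    have hmemμ : ∀ᵐ s ∂μ, q s ∈ D := by
      filter_upwards [hmem] with s hs
      by_cases h : s ∈ A
      · simpa [hq, indicator_of_mem h] using hs h
      · simpa [hq, indicator_of_notMem h] using hD0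
    have hmw' : ∀ᵐ s ∂mw, q s ∈ D :=
      (withDensity_absolutelyContinuous μ _).ae_le hmemμ
    rw [hν]
    exact Measure.ae_smul_measure hmw' _
  have hDmem : ∫ s, q s ∂ν ∈ D := hDcx.integral_mem hDcl hmemν hqν
  have hcomp : ∫ s in A, F s ∂μ = c₁ • ∫ s, q s ∂ν := by
    rw [hν, integral_smul_measure, hmw, integral_withDensity_eq_integral_smul hwm]
    rw [show (fun s => w s • q s) = A.indicator F from funext hsmul_eq, integral_indicator hA]
    rw [smul_smul, ENNReal.toReal_inv, ENNReal.toReal_ofReal hc₁pos.le,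
      mul_inv_cancel₀ hc₁pos.ne', one_smul]
  rw [hcomp]
  exact smul_mem_smul_set hDmem

set_option maxHeartbeats 1000000 in
lemma aux_pointwise [CompleteSpace W] (μ : Measure ℝ) (H : ℝ → W →L[ℝ] W) (M : ℝ) (hM0 : 0 ≤ M)
    (hHb : ∀ τ, ‖H τ‖ ≤ M)
    (hHcont : Continuous fun p : ℝ × W => H p.1 p.2)
    (g : ℕ → ℝ → W) (g₀ : ℝ → W) (hgn : ∀ n, MemLp (g n) 1 μ) (hg₀ : MemLp g₀ 1 μ)
    (hweak : ∀ Φ : (Lp W 1 μ) →L[ℝ] ℝ,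
      Tendsto (fun n : ℕ => Φ ((hgn n).toLp (g n))) atTop (𝓝 (Φ (hg₀.toLp g₀))))
    (t : ℝ) (A : Set ℝ) (hA : MeasurableSet A)
    (f : W →L[ℝ] ℝ) :
    Tendsto (fun n => f (∫ s in A, H (t - s) (g n s - g₀ s) ∂μ)) atTop (𝓝 0) := by
  set k : ℝ → W →L[ℝ] ℝ :=
    fun s => (A.indicator (fun _ => (1:ℝ)) s) • (f.comp (H (t - s))) with hk
  have hind01 : ∀ s, ‖A.indicator (fun _ => (1:ℝ)) s‖ ≤ 1 := by
    intro s
    by_cases h : s ∈ A <;> simp [indicator_of_mem, indicator_of_notMem, h]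
  have hkb : ∀ s, ‖k s‖ ≤ ‖f‖ * M := by
    intro s
    have h1 : ‖k s‖ ≤ ‖A.indicator (fun _ => (1:ℝ)) s‖ * ‖f.comp (H (t - s))‖ :=
      ContinuousLinearMap.opNorm_smul_le _ _
    have h2 : ‖f.comp (H (t - s))‖ ≤ ‖f‖ * M :=
      le_trans (f.opNorm_comp_le _) (mul_le_mul_of_nonneg_left (hHb _) (norm_nonneg _))
    have h3 := hind01 s
    nlinarith [norm_nonneg (A.indicator (fun _ => (1:ℝ)) s),
      norm_nonneg (f.comp (H (t - s))), mul_nonneg (norm_nonneg f) hM0]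
  have hkapp : ∀ (u : ℝ → W) (s : ℝ),
      k s (u s) = A.indicator (fun s' => f (H (t - s') (u s'))) s := by
    intro u s
    rw [hk]
    by_cases h : s ∈ A <;>
      simp [indicator_of_mem, indicator_of_notMem, h]
  have hkmeas : ∀ u : ℝ → W, AEStronglyMeasurable u μ →
      AEStronglyMeasurable (fun s => k s (u s)) μ := by
    intro u hu
    have h1 : AEStronglyMeasurable (fun s => f (H (t - s) (u s))) μ :=
      f.continuous.comp_aestronglyMeasurable (aux_comp_meas μ H hHcont hu t)
    have h2 : AEStronglyMeasurable (fun s =>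
        A.indicator (fun s' => f (H (t - s') (u s'))) s) μ := h1.indicator hA
    exact h2.congr (Eventually.of_forall fun s => (hkapp u s).symm)
  obtain ⟨Φ, hΦ⟩ := aux_functional μ k (‖f‖ * M) (by positivity) hkb hkmeas
  have hki : ∀ (u : ℝ → W), Integrable u μ → Integrable (fun s => k s (u s)) μ := by
    intro u hu
    refine (hu.norm.const_mul (‖f‖ * M)).mono' (hkmeas u hu.aestronglyMeasurable) ?_
    exact Eventually.of_forall fun s => le_trans ((k s).le_opNorm _)
      (mul_le_mul_of_nonneg_right (hkb s) (norm_nonneg _))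
  have hgnI : ∀ n, Integrable (g n) μ := fun n => memLp_one_iff_integrable.mp (hgn n)
  have hg₀I : Integrable g₀ μ := memLp_one_iff_integrable.mp hg₀
  have hlim : Tendsto (fun n => (∫ s, k s (g n s) ∂μ) - ∫ s, k s (g₀ s) ∂μ) atTop (𝓝 0) := by
    have h0 := (hweak Φ).sub_const (Φ (hg₀.toLp g₀))
    rw [sub_self] at h0
    have h1 : (fun n : ℕ => Φ ((hgn n).toLp (g n)) - Φ (hg₀.toLp g₀))
        = fun n : ℕ => (∫ s, k s (g n s) ∂μ) - ∫ s, k s (g₀ s) ∂μ := by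
      funext n
      rw [hΦ (g n) (hgn n), hΦ g₀ hg₀]
    rwa [h1] at h0
  have heq : ∀ n, (∫ s, k s (g n s) ∂μ) - ∫ s, k s (g₀ s) ∂μ
      = f (∫ s in A, H (t - s) (g n s - g₀ s) ∂μ) := by
    intro n
    rw [← integral_sub (hki _ (hgnI n)) (hki _ hg₀I)]
    have h1 : ∀ s, k s (g n s) - k s (g₀ s) = k s (g n s - g₀ s) := fun s => (map_sub _ _ _).symm
    simp_rw [h1]
    have h2 : ∀ s, k s (g n s - g₀ s)
        = A.indicator (fun s' => f (H (t - s') (g n s' - g₀ s'))) s := hkapp _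
    simp_rw [h2]
    rw [integral_indicator hA]
    have hFi : Integrable (fun s => H (t - s) (g n s - g₀ s)) (μ.restrict A) :=
      (aux_comp_int μ H M hHb hHcont ((hgnI n).sub hg₀I) t).restrict
    exact ContinuousLinearMap.integral_comp_comm f hFi
  simp_rw [heq] at hlim
  exact hlim

end AuxStmt18

set_option maxHeartbeats 2000000 in
/-- if `(gₙ) ⊂ L¹([0,T];W)` is integrably bounded and `gₙ ⇀ g` weakly in
`L¹([0,T];W)`, then `𝒢 gₙ → 𝒢 g` in `C([0,T];W)`, i.e.
`sup_{t∈[0,T]} ‖∫₀ᵗ G(t-s)(gₙ(s) - g(s)) ds‖ → 0`. -/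
theorem stmt_18 {W : Type*}
    [NormedAddCommGroup W] [NormedSpace ℝ W] [CompleteSpace W]
    (T : ℝ) (hT : 0 < T)
    (G : ℝ → W →L[ℝ] W)
    (hGsc : ∀ w : W, ContinuousOn (fun t : ℝ => G t w) (Set.Icc 0 T))
    (hG0 : G 0 = 1)
    (hGcpt : ∀ t ∈ Set.Ioc (0 : ℝ) T, IsCompactOperator (⇑(G t)))
    (hGnorm : ContinuousOn G (Set.Ioc 0 T))
    (g : ℕ → ℝ → W) (g₀ : ℝ → W)
    (hgn : ∀ n : ℕ, MemLp (g n) 1 (volume.restrict (Set.Icc (0 : ℝ) T)))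
    (hg₀ : MemLp g₀ 1 (volume.restrict (Set.Icc (0 : ℝ) T)))
    (φ : ℝ → ℝ) (hφint : Integrable φ (volume.restrict (Set.Icc (0 : ℝ) T)))
    (hφpos : ∀ t : ℝ, 0 ≤ φ t)
    (hbdd : ∀ n : ℕ, ∀ᵐ t ∂(volume.restrict (Set.Icc (0 : ℝ) T)), ‖g n t‖ ≤ φ t)
    (hweak : ∀ Φ : (Lp W 1 (volume.restrict (Set.Icc (0 : ℝ) T))) →L[ℝ] ℝ,
      Tendsto (fun n : ℕ => Φ ((hgn n).toLp (g n))) atTop (nhds (Φ (hg₀.toLp g₀)))) :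
    TendstoUniformlyOn
      (fun (n : ℕ) (t : ℝ) => ∫ s in (0 : ℝ)..t, G (t - s) (g n s))
      (fun t : ℝ => ∫ s in (0 : ℝ)..t, G (t - s) (g₀ s))
      atTop (Set.Icc 0 T) := by
  classical
  set μ := volume.restrict (Set.Icc (0 : ℝ) T) with hμdef
  haveI hfinmeas : IsFiniteMeasure μ := by
    constructor
    rw [hμdef, Measure.restrict_apply_univ]
    exact measure_Icc_lt_top
  have hT0 : (0:ℝ) ≤ T := hT.le
  obtain ⟨M, hM1, hM⟩ := aux_bound T G hGsc
  have hM0 : (0:ℝ) < M := lt_of_lt_of_le one_pos hM1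
  set cl : ℝ → ℝ := fun τ => max 0 (min τ T) with hcldef
  have hclmem : ∀ τ, cl τ ∈ Icc (0:ℝ) T := fun τ =>
    ⟨le_max_left _ _, max_le hT0 (min_le_right _ _)⟩
  have hcleq : ∀ τ ∈ Icc (0:ℝ) T, cl τ = τ := by
    intro τ hτ
    rw [hcldef]
    simp only
    rw [min_eq_left hτ.2, max_eq_right hτ.1]
  set H : ℝ → W →L[ℝ] W := fun τ => G (cl τ) with hHdef
  have hHb : ∀ τ, ‖H τ‖ ≤ M := fun τ => hM _ (hclmem τ)
  have hHeq : ∀ τ ∈ Icc (0:ℝ) T, H τ = G τ := by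
    intro τ hτ
    rw [hHdef]
    simp only
    rw [hcleq τ hτ]
  have hclcont : Continuous cl := continuous_const.max (continuous_id.min continuous_const)
  have hHsc : ∀ w : W, Continuous fun τ => H τ w := fun w =>
    (hGsc w).comp_continuous hclcont hclmem
  have hHcont : Continuous fun p : ℝ × W => H p.1 p.2 := aux_joint_cont H M hHb hHsc
  have hgnI : ∀ n, Integrable (g n) μ := fun n => memLp_one_iff_integrable.mp (hgn n)
  have hg₀I : Integrable g₀ μ := memLp_one_iff_integrable.mp hg₀
  have hhI : ∀ n, Integrable (fun s => g n s - g₀ s) μ := fun n => (hgnI n).sub hg₀I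
  set ψ : ℝ → ℝ := fun s => φ s + ‖g₀ s‖ with hψdef
  have hψI : Integrable ψ μ := hφint.add hg₀I.norm
  have hψ0 : ∀ s, 0 ≤ ψ s := fun s => add_nonneg (hφpos s) (norm_nonneg _)
  have hψb : ∀ n, ∀ᵐ s ∂μ, ‖g n s - g₀ s‖ ≤ ψ s := by
    intro n
    filter_upwards [hbdd n] with s hs
    calc ‖g n s - g₀ s‖ ≤ ‖g n s‖ + ‖g₀ s‖ := norm_sub_le _ _
      _ ≤ φ s + ‖g₀ s‖ := by linarith
  have hFI : ∀ n t, Integrable (fun s => H (t - s) (g n s - g₀ s)) μ := fun n t =>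
    aux_comp_int μ H M hHb hHcont (hhI n) t
  set Df : ℕ → ℝ → W := fun n t => ∫ s in Ioc (0:ℝ) t, H (t - s) (g n s - g₀ s) ∂μ with hDf
  rw [Metric.tendstoUniformlyOn_iff]
  intro ε hε
  have hEq : ∀ (u : ℝ → W), ∀ t ∈ Icc (0:ℝ) T,
      (∫ s in (0:ℝ)..t, G (t - s) (u s)) = ∫ s in Ioc (0:ℝ) t, H (t - s) (u s) ∂μ := by
    intro u t ht
    rw [intervalIntegral.integral_of_le ht.1]
    have h1 : volume.restrict (Ioc (0:ℝ) t) = μ.restrict (Ioc (0:ℝ) t) := by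
      rw [hμdef, Measure.restrict_restrict measurableSet_Ioc,
        inter_eq_left.mpr (fun s hs => mem_Icc.mpr ⟨hs.1.le, hs.2.trans ht.2⟩)]
    calc (∫ s in Ioc (0:ℝ) t, G (t - s) (u s))
        = ∫ s in Ioc (0:ℝ) t, G (t - s) (u s) ∂μ := by rw [h1]
      _ = ∫ s in Ioc (0:ℝ) t, H (t - s) (u s) ∂μ := by
          refine (setIntegral_congr_fun measurableSet_Ioc fun s hs => ?_).symm
          rw [hHeq (t - s) ⟨by linarith [hs.2], by linarith [hs.1, ht.2]⟩]
  -- core estimate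
  have key : ∀ᶠ n in atTop, ∀ t ∈ Icc (0:ℝ) T, ‖Df n t‖ < ε := by
    set ε' := ε / (8*M) with hε'def
    have hε'pos : 0 < ε' := by positivity
    have hMε' : M * ε' = ε/8 := by
      rw [hε'def]
      field_simp
    have h2Mε' : 2*M*ε' = ε/4 := by
      rw [hε'def]
      field_simp
      ring
    obtain ⟨η, hη0, hη⟩ := aux_abscont μ ψ hψI hψ0 hε'pos
    set δ := min (η/2) T with hδdef
    have hδ0 : 0 < δ := lt_min (by linarith) hT
    have hδT : δ ≤ T := min_le_right _ _
    have hδη : δ ≤ η := le_trans (min_le_left _ _) (by linarith)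
    set c := ∫ s, ψ s ∂μ with hcdef
    have hc0 : 0 ≤ c := integral_nonneg hψ0
    set κ := ε / (8*(c+1)) with hκdef
    have hκpos : 0 < κ := by positivity
    have hκc : κ * (c+1) = ε/8 := by
      rw [hκdef]
      field_simp
    have hsubIoc : Icc δ T ⊆ Ioc (0:ℝ) T := fun x hx => ⟨lt_of_lt_of_le hδ0 hx.1, hx.2⟩
    have huc := isCompact_Icc.uniformContinuousOn_of_continuous (hGnorm.mono hsubIoc)
    obtain ⟨r₀, hr₀, hruc⟩ := Metric.uniformContinuousOn_iff.mp huc κ hκpos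
    set r := min (r₀/2) δ with hrdef
    have hr0 : 0 < r := lt_min (by linarith) hδ0
    have hrδ : r ≤ δ := min_le_right _ _
    have hrr₀ : r ≤ r₀/2 := min_le_left _ _
    obtain ⟨D, hDcpt, hDcx, hDcl, hD0, hDmem⟩ := aux_compact T δ hδ0 hδT G hGnorm hGcpt
    have hψm := hψI.1
    set ψm := hψm.mk ψ with hψmdef
    have hψmeq : ψ =ᵐ[μ] ψm := hψm.ae_eq_mk
    set ψ₁ : ℝ → ℝ := fun s => max (ψm s) 0 + 1 with hψ₁def
    have hψ₁meas : Measurable ψ₁ :=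
      (hψm.measurable_mk.max measurable_const).add_const 1
    have hψ₁1 : ∀ s, 1 ≤ ψ₁ s := by
      intro s
      rw [hψ₁def]
      simp only
      linarith [le_max_right (ψm s) (0:ℝ)]
    have hψ₁ae : ψ₁ =ᵐ[μ] fun s => ψ s + 1 := by
      filter_upwards [hψmeq] with s hs
      rw [hψ₁def]
      simp only
      rw [← hs, max_eq_left (hψ0 s)]
    have hψ₁I : Integrable ψ₁ μ := ((hψI.add (integrable_const 1)).congr hψ₁ae.symm)
    set c₁ := ∫ s, ψ₁ s ∂μ with hc₁def
    have hμuniv : (μ univ).toReal = T := by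
      rw [hμdef, Measure.restrict_apply_univ, Real.volume_Icc, sub_zero,
        ENNReal.toReal_ofReal hT0]
    have hc₁pos : 0 < c₁ := by
      have h1 : T ≤ c₁ := by
        have h2 := integral_mono (integrable_const (1:ℝ)) hψ₁I hψ₁1
        rwa [integral_const, measureReal_def, hμuniv, smul_eq_mul, mul_one] at h2
      linarith
    set Cset := c₁ • D with hCsetdef
    have hCcpt : IsCompact Cset := hDcpt.smul c₁
    set v : ℕ → ℝ → W :=
      fun n t => ∫ s in Ioc (0:ℝ) (t - δ), H (t - s) (g n s - g₀ s) ∂μ with hvdef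
    have hvmem : ∀ n, ∀ t ∈ Icc (0:ℝ) T, v n t ∈ Cset := by
      intro n t ht
      simp only [hvdef, hCsetdef]
      refine aux_integral_mem μ ψ₁ hψ₁meas hψ₁1 hψ₁I c₁ hc₁def hc₁pos D hDcx hDcl hD0 _
        (hFI n t) _ measurableSet_Ioc ?_
      filter_upwards [hψb n, hψ₁ae] with s hs hs1
      intro hsA
      have hψ₁s : 0 < ψ₁ s := lt_of_lt_of_le one_pos (hψ₁1 s)
      have hts : t - s ∈ Icc δ T := ⟨by linarith [hsA.2], by linarith [hsA.1, ht.2]⟩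
      have hwball : (ψ₁ s)⁻¹ • (g n s - g₀ s) ∈ closedBall (0:W) 1 := by
        rw [mem_closedBall, dist_zero_right, norm_smul, norm_inv, Real.norm_eq_abs,
          abs_of_pos hψ₁s, inv_mul_le_iff₀ hψ₁s, mul_one]
        rw [hs1]
        linarith
      have hmem2 := hDmem (t - s) hts _ hwball
      rw [_root_.map_smul] at hmem2
      rw [hHeq (t - s) ⟨le_trans hδ0.le hts.1, hts.2⟩]
      exact hmem2
    have hpt : ∀ t ∈ Icc (0:ℝ) T, Tendsto (fun n => ‖v n t‖) atTop (𝓝 0) := by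
      intro t ht
      have h1 : Tendsto (fun n => v n t) atTop (𝓝 0) := by
        apply aux_weak_norm hCcpt (fun n => hvmem n t ht)
        intro f
        exact aux_pointwise μ H M hM0.le hHb hHcont g g₀ hgn hg₀ hweak t _
          measurableSet_Ioc f
      have h2 := (continuous_norm.tendsto (0:W)).comp h1
      rw [norm_zero] at h2
      exact h2
    have hbint : ∀ (u : ℝ → W) (C' : ℝ), 0 ≤ C' → (∀ᵐ s ∂μ, ‖u s‖ ≤ C' * ψ s) →
        ∀ A : Set ℝ, MeasurableSet A → μ A ≤ ENNReal.ofReal η →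
        ‖∫ s in A, u s ∂μ‖ ≤ C' * ε' := by
      intro u C' hC' hub A hA hAμ
      calc ‖∫ s in A, u s ∂μ‖ ≤ ∫ s in A, C' * ψ s ∂μ := by
            exact norm_integral_le_of_norm_le ((hψI.const_mul C').integrableOn)
              (ae_restrict_of_ae hub)
        _ = C' * ∫ s in A, ψ s ∂μ := by
            rw [show (fun s => C' * ψ s) = fun s => C' • ψ s from rfl, integral_smul,
              smul_eq_mul]
        _ ≤ C' * ε' := mul_le_mul_of_nonneg_left (hη A hA hAμ) hC'
    have hμIoc : ∀ a b : ℝ, μ (Ioc a b) ≤ ENNReal.ofReal (b - a) := by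
      intro a b
      calc μ (Ioc a b) ≤ volume (Ioc a b) := by
            rw [hμdef, Measure.restrict_apply measurableSet_Ioc]
            exact measure_mono inter_subset_left
        _ = ENNReal.ofReal (b - a) := Real.volume_Ioc
    have hsplit : ∀ (u : ℝ → W), Integrable u μ → ∀ a b : ℝ, 0 ≤ a → a ≤ b →
        ∫ s in Ioc (0:ℝ) b, u s ∂μ
          = (∫ s in Ioc (0:ℝ) a, u s ∂μ) + ∫ s in Ioc a b, u s ∂μ := by
      intro u hu a b ha hab
      rw [← Set.Ioc_union_Ioc_eq_Ioc ha hab]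
      exact setIntegral_union (Set.Ioc_disjoint_Ioc_of_le le_rfl) measurableSet_Ioc
        hu.integrableOn hu.integrableOn
    have hubM : ∀ n t, ∀ᵐ s ∂μ, ‖H (t - s) (g n s - g₀ s)‖ ≤ M * ψ s := by
      intro n t
      filter_upwards [hψb n] with s hs
      calc ‖H (t - s) (g n s - g₀ s)‖ ≤ ‖H (t - s)‖ * ‖g n s - g₀ s‖ :=
            (H (t - s)).le_opNorm _
        _ ≤ M * ψ s := mul_le_mul (hHb _) hs (norm_nonneg _) hM0.le
    have htail : ∀ n, ∀ t ∈ Icc (0:ℝ) T, ‖Df n t - v n t‖ ≤ ε/8 := by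
      intro n t ht
      set m := max (t - δ) 0 with hmdef
      have hm0 : 0 ≤ m := le_max_right _ _
      have hmt : m ≤ t := max_le (by linarith [ht.1]) ht.1
      have hIoceq : Ioc (0:ℝ) (t - δ) = Ioc 0 m := by
        rcases le_or_gt (t - δ) 0 with h | h
        · rw [Set.Ioc_eq_empty (not_lt.mpr h), hmdef, max_eq_right h, Set.Ioc_self]
        · rw [hmdef, max_eq_left h.le]
      have hdiff : Df n t - v n t = ∫ s in Ioc m t, H (t - s) (g n s - g₀ s) ∂μ := by
        simp only [hDf, hvdef]
        rw [hIoceq, hsplit _ (hFI n t) m t hm0 hmt]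
        abel
      rw [hdiff]
      have hmeasle : μ (Ioc m t) ≤ ENNReal.ofReal η := by
        refine le_trans (hμIoc m t) (ENNReal.ofReal_le_ofReal ?_)
        rcases le_or_gt (t - δ) 0 with h | h
        · rw [hmdef, max_eq_right h]; linarith [ht.1]
        · rw [hmdef, max_eq_left h.le]; linarith
      calc ‖∫ s in Ioc m t, H (t - s) (g n s - g₀ s) ∂μ‖ ≤ M * ε' :=
            hbint _ M hM0.le (hubM n t) (Ioc m t) measurableSet_Ioc hmeasle
        _ = ε/8 := hMε'
    have hequi : ∀ n, ∀ t' ∈ Icc (0:ℝ) T, ∀ t ∈ Icc (0:ℝ) T, t' ≤ t → t - t' ≤ r →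
        ‖Df n t - Df n t'‖ ≤ ε/2 := by
      intro n t' ht' t ht htt' hrr
      have h1 : Df n t = (∫ s in Ioc (0:ℝ) t', H (t - s) (g n s - g₀ s) ∂μ)
          + ∫ s in Ioc t' t, H (t - s) (g n s - g₀ s) ∂μ := by
        simp only [hDf]
        exact hsplit _ (hFI n t) t' t ht'.1 htt'
      set m' := max (t' - δ) 0 with hm'def
      have hm'0 : 0 ≤ m' := le_max_right _ _
      have hm't : m' ≤ t' := max_le (by linarith [ht'.1]) ht'.1
      have h2 : (∫ s in Ioc (0:ℝ) t', H (t - s) (g n s - g₀ s) ∂μ) - Df n t'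
          = ∫ s in Ioc (0:ℝ) t',
              (H (t - s) (g n s - g₀ s) - H (t' - s) (g n s - g₀ s)) ∂μ := by
        simp only [hDf]
        rw [integral_sub (hFI n t).integrableOn (hFI n t').integrableOn]
      have h3 : ∫ s in Ioc (0:ℝ) t',
            (H (t - s) (g n s - g₀ s) - H (t' - s) (g n s - g₀ s)) ∂μ
          = (∫ s in Ioc (0:ℝ) m',
              (H (t - s) (g n s - g₀ s) - H (t' - s) (g n s - g₀ s)) ∂μ)
            + ∫ s in Ioc m' t',
              (H (t - s) (g n s - g₀ s) - H (t' - s) (g n s - g₀ s)) ∂μ :=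
        hsplit _ ((hFI n t).sub (hFI n t')) m' t' hm'0 hm't
      have hP1 : ‖∫ s in Ioc (0:ℝ) m',
          (H (t - s) (g n s - g₀ s) - H (t' - s) (g n s - g₀ s)) ∂μ‖ ≤ ε/8 := by
        have hub : ∀ᵐ s ∂(μ.restrict (Ioc (0:ℝ) m')),
            ‖H (t - s) (g n s - g₀ s) - H (t' - s) (g n s - g₀ s)‖ ≤ κ * ψ s := by
          filter_upwards [ae_restrict_mem measurableSet_Ioc, ae_restrict_of_ae (hψb n)]
            with s hsA hs
          obtain ⟨hs1, hs2⟩ := hsA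
          have hst' : s ≤ t' - δ := by
            rcases le_or_gt (t' - δ) 0 with hcase | hcase
            · exfalso
              have hm0' : m' = 0 := by rw [hm'def]; exact max_eq_right hcase
              rw [hm0'] at hs2
              linarith
            · have hm'eq : m' = t' - δ := by rw [hm'def]; exact max_eq_left hcase.le
              linarith [hs2, hm'eq]
          have hmem1 : t' - s ∈ Icc δ T := ⟨by linarith, by linarith [ht'.2]⟩
          have hmem2 : t - s ∈ Icc δ T := ⟨by linarith, by linarith [ht.2]⟩
          have hd : dist (t - s) (t' - s) < r₀ := by
            rw [Real.dist_eq]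
            have he : t - s - (t' - s) = t - t' := by ring
            rw [he, abs_of_nonneg (by linarith)]
            linarith
          have hGd : dist (G (t - s)) (G (t' - s)) < κ := hruc _ hmem2 _ hmem1 hd
          rw [hHeq (t - s) ⟨le_trans hδ0.le hmem2.1, hmem2.2⟩,
            hHeq (t' - s) ⟨le_trans hδ0.le hmem1.1, hmem1.2⟩]
          calc ‖G (t - s) (g n s - g₀ s) - G (t' - s) (g n s - g₀ s)‖
              = ‖(G (t - s) - G (t' - s)) (g n s - g₀ s)‖ := by
                rw [ContinuousLinearMap.sub_apply]
            _ ≤ ‖G (t - s) - G (t' - s)‖ * ‖g n s - g₀ s‖ :=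
                (G (t - s) - G (t' - s)).le_opNorm _
            _ ≤ κ * ψ s := by
                refine mul_le_mul ?_ hs (norm_nonneg _) hκpos.le
                rw [← dist_eq_norm]
                exact hGd.le
        calc ‖∫ s in Ioc (0:ℝ) m',
              (H (t - s) (g n s - g₀ s) - H (t' - s) (g n s - g₀ s)) ∂μ‖
            ≤ ∫ s in Ioc (0:ℝ) m', κ * ψ s ∂μ :=
              norm_integral_le_of_norm_le ((hψI.const_mul κ).integrableOn) hub
          _ = κ * ∫ s in Ioc (0:ℝ) m', ψ s ∂μ := by
              rw [show (fun s => κ * ψ s) = fun s => κ • ψ s from rfl, integral_smul,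
                smul_eq_mul]
          _ ≤ κ * c :=
              mul_le_mul_of_nonneg_left
                (setIntegral_le_integral hψI (Eventually.of_forall hψ0)) hκpos.le
          _ ≤ ε/8 := by nlinarith
      have hP2 : ‖∫ s in Ioc m' t',
          (H (t - s) (g n s - g₀ s) - H (t' - s) (g n s - g₀ s)) ∂μ‖ ≤ 2*M*ε' := by
        have hub : ∀ᵐ s ∂μ, ‖H (t - s) (g n s - g₀ s) - H (t' - s) (g n s - g₀ s)‖
            ≤ 2*M * ψ s := by
          filter_upwards [hubM n t, hubM n t'] with s hA hB
          calc ‖H (t - s) (g n s - g₀ s) - H (t' - s) (g n s - g₀ s)‖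
              ≤ ‖H (t - s) (g n s - g₀ s)‖ + ‖H (t' - s) (g n s - g₀ s)‖ := norm_sub_le _ _
            _ ≤ 2*M * ψ s := by linarith
        have hmeasle : μ (Ioc m' t') ≤ ENNReal.ofReal η := by
          refine le_trans (hμIoc m' t') (ENNReal.ofReal_le_ofReal ?_)
          rcases le_or_gt (t' - δ) 0 with h | h
          · rw [hm'def, max_eq_right h]; linarith [ht'.1]
          · rw [hm'def, max_eq_left h.le]; linarith
        exact hbint _ (2*M) (by linarith) hub (Ioc m' t') measurableSet_Ioc hmeasle
      have hP3 : ‖∫ s in Ioc t' t, H (t - s) (g n s - g₀ s) ∂μ‖ ≤ M*ε' := by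
        have hmeasle : μ (Ioc t' t) ≤ ENNReal.ofReal η := by
          refine le_trans (hμIoc t' t) (ENNReal.ofReal_le_ofReal ?_)
          linarith
        exact hbint _ M hM0.le (hubM n t) (Ioc t' t) measurableSet_Ioc hmeasle
      have e1 : Df n t - Df n t'
          = ((∫ s in Ioc (0:ℝ) m',
              (H (t - s) (g n s - g₀ s) - H (t' - s) (g n s - g₀ s)) ∂μ)
            + ∫ s in Ioc m' t',
              (H (t - s) (g n s - g₀ s) - H (t' - s) (g n s - g₀ s)) ∂μ)
            + ∫ s in Ioc t' t, H (t - s) (g n s - g₀ s) ∂μ := by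
        rw [← h3, ← h2, h1]
        abel
      rw [e1]
      calc ‖_ + _‖ ≤ ‖(∫ s in Ioc (0:ℝ) m',
              (H (t - s) (g n s - g₀ s) - H (t' - s) (g n s - g₀ s)) ∂μ)
            + ∫ s in Ioc m' t',
              (H (t - s) (g n s - g₀ s) - H (t' - s) (g n s - g₀ s)) ∂μ‖
            + ‖∫ s in Ioc t' t, H (t - s) (g n s - g₀ s) ∂μ‖ := norm_add_le _ _
        _ ≤ (‖∫ s in Ioc (0:ℝ) m',
              (H (t - s) (g n s - g₀ s) - H (t' - s) (g n s - g₀ s)) ∂μ‖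
            + ‖∫ s in Ioc m' t',
              (H (t - s) (g n s - g₀ s) - H (t' - s) (g n s - g₀ s)) ∂μ‖)
            + ‖∫ s in Ioc t' t, H (t - s) (g n s - g₀ s) ∂μ‖ := by
              gcongr
              exact norm_add_le _ _
        _ ≤ (ε/8 + 2*M*ε') + M*ε' := by
              gcongr
        _ = ε/2 := by rw [h2Mε', hMε']; ring
    obtain ⟨grid, hgridsub, hgridfin, hgridcov⟩ := isCompact_Icc.elim_finite_subcover_image
      (fun (i : ℝ) (_ : i ∈ Icc (0:ℝ) T) => isOpen_ball (x := i) (ε := r))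
      (fun x hx => mem_biUnion hx (mem_ball_self hr0))
    have hev : ∀ᶠ n in atTop, ∀ i ∈ grid, ‖v n i‖ < ε/8 := by
      rw [eventually_all_finite hgridfin]
      intro i hi
      exact (hpt i (hgridsub hi)).eventually_lt_const (by linarith)
    filter_upwards [hev] with n hn t ht
    obtain ⟨i, hi, hti⟩ : ∃ i ∈ grid, t ∈ ball i r := by
      simpa only [mem_iUnion, exists_prop] using hgridcov ht
    have hiIcc := hgridsub hi
    have hDi : ‖Df n i‖ ≤ ε/8 + ε/8 := by
      calc ‖Df n i‖ = ‖(Df n i - v n i) + v n i‖ := by rw [sub_add_cancel]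
        _ ≤ ‖Df n i - v n i‖ + ‖v n i‖ := norm_add_le _ _
        _ ≤ ε/8 + ε/8 := add_le_add (htail n i hiIcc) (hn i hi).le
    have hdist : dist t i < r := mem_ball.mp hti
    rcases le_total i t with hcase | hcase
    · have h1 : t - i ≤ r := by
        rw [Real.dist_eq, abs_of_nonneg (by linarith)] at hdist
        linarith
      calc ‖Df n t‖ = ‖(Df n t - Df n i) + Df n i‖ := by rw [sub_add_cancel]
        _ ≤ ‖Df n t - Df n i‖ + ‖Df n i‖ := norm_add_le _ _
        _ ≤ ε/2 + (ε/8 + ε/8) := add_le_add (hequi n i hiIcc t ht hcase h1) hDi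
        _ < ε := by linarith
    · have h1 : i - t ≤ r := by
        rw [Real.dist_eq, abs_of_nonpos (by linarith)] at hdist
        linarith
      calc ‖Df n t‖ = ‖(Df n t - Df n i) + Df n i‖ := by rw [sub_add_cancel]
        _ ≤ ‖Df n t - Df n i‖ + ‖Df n i‖ := norm_add_le _ _
        _ ≤ ε/2 + (ε/8 + ε/8) := by
            refine add_le_add ?_ hDi
            rw [norm_sub_rev]
            exact hequi n t ht i hiIcc hcase h1
        _ < ε := by linarith
  filter_upwards [key] with n hn t ht
  have h2 : (∫ s in Ioc (0:ℝ) t, H (t - s) (g₀ s) ∂μ)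
      - ∫ s in Ioc (0:ℝ) t, H (t - s) (g n s) ∂μ = - Df n t := by
    simp only [hDf]
    rw [← integral_sub (aux_comp_int μ H M hHb hHcont hg₀I t).integrableOn
      (aux_comp_int μ H M hHb hHcont (hgnI n) t).integrableOn, ← integral_neg]
    refine integral_congr_ae (Eventually.of_forall fun s => ?_)
    show H (t - s) (g₀ s) - H (t - s) (g n s) = -(H (t - s) (g n s - g₀ s))
    rw [← map_sub, ← map_neg, neg_sub]
  have hgoal : dist (∫ s in (0:ℝ)..t, G (t - s) (g₀ s)) (∫ s in (0:ℝ)..t, G (t - s) (g n s)) < ε := by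
    rw [dist_eq_norm, hEq g₀ t ht, hEq (g n) t ht, h2, norm_neg]
    exact hn t ht
  exact hgoal
end

section
/- Let p ∈ [2,∞), λ > 0, and let g : [0,π] → ℝ be twice continuously differentiable with g(0) = g(π) = 0. Set h(ξ) = λ g(ξ) − g''(ξ). Then λ (∫₀^π |g(ξ)|^p dξ)^{1/p} ≤ (∫₀^π |h(ξ)|^p dξ)^{1/p}; that is, the resolvent of the one-dimensional Dirichlet Laplacian on L^p(0,π) satisfies λ‖g‖_{L^p(0,π)} ≤ ‖λg − g''‖_{L^p(0,π)}. -/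
open MeasureTheory Set

lemma aux_hasDerivAt_phi {p : ℝ} (hp : 2 ≤ p) (t : ℝ) :
    HasDerivAt (fun t : ℝ => |t| ^ (p - 2) * t) ((p - 1) * |t| ^ (p - 2)) t := by
  rcases eq_or_ne t 0 with rfl | ht
  · rcases eq_or_lt_of_le hp with hp2 | hp2
    · have : (fun t : ℝ => |t| ^ (p - 2) * t) = fun t : ℝ => t := by
        funext t; rw [← hp2]; norm_num
      rw [this]
      have : (p - 1) * |(0:ℝ)| ^ (p - 2) = 1 := by rw [← hp2]; norm_num
      rw [this]; exact hasDerivAt_id 0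
    · have h0 : |(0:ℝ)| ^ (p - 2) = 0 := by
        rw [abs_zero, Real.zero_rpow (by linarith)]
      rw [h0, mul_zero]
      rw [hasDerivAt_iff_tendsto_slope]
      have hcont : Continuous fun t : ℝ => |t| ^ (p - 2) :=
        continuous_abs.rpow_const (fun x => Or.inr (by linarith))
      have : Filter.Tendsto (fun t : ℝ => |t| ^ (p - 2)) (nhdsWithin 0 {(0:ℝ)}ᶜ) (nhds 0) := by
        have h := (hcont.tendsto 0).mono_left (nhdsWithin_le_nhds (s := {(0:ℝ)}ᶜ))
        rwa [h0] at h
      refine this.congr' ?_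
      filter_upwards [self_mem_nhdsWithin] with x hx
      have hx : x ≠ 0 := hx
      rw [slope_def_field, mul_zero, sub_zero, sub_zero, mul_div_assoc, div_self hx, mul_one]
  · have habs : HasDerivAt (fun t : ℝ => |t|) (SignType.sign t : ℝ) t := hasDerivAt_abs ht
    have hrpow : HasDerivAt (fun y : ℝ => y ^ (p - 2)) ((p - 2) * |t| ^ (p - 2 - 1)) |t| :=
      Real.hasDerivAt_rpow_const (Or.inl (abs_ne_zero.mpr ht))
    have hcomp : HasDerivAt (fun t : ℝ => |t| ^ (p - 2))
        ((p - 2) * |t| ^ (p - 2 - 1) * (SignType.sign t : ℝ)) t := hrpow.comp t habs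
    have this : HasDerivAt (fun t : ℝ => |t| ^ (p - 2) * t)
        ((p - 2) * |t| ^ (p - 2 - 1) * (SignType.sign t : ℝ) * t + |t| ^ (p - 2) * 1) t :=
      hcomp.mul (hasDerivAt_id t)
    convert this using 1
    have hst : (SignType.sign t : ℝ) * t = |t| := by
      rcases lt_or_gt_of_ne ht with h | h
      · simp [sign_neg h, abs_of_neg h]
      · simp [sign_pos h, abs_of_pos h]
    have habs' : |t| ^ (p - 2 - 1) * |t| = |t| ^ (p - 2) := by
      rw [← Real.rpow_add_one (abs_ne_zero.mpr ht)]; ring_nf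
    calc (p - 1) * |t| ^ (p - 2)
        = (p - 2) * |t| ^ (p - 2) + |t| ^ (p - 2) := by ring
      _ = (p - 2) * |t| ^ (p - 2 - 1) * (SignType.sign t : ℝ) * t + |t| ^ (p - 2) * 1 := by
          rw [mul_one, mul_assoc ((p-2) * _), hst, mul_assoc, habs']

lemma aux_memLp {f : ℝ → ℝ} (hf : ContinuousOn f (Set.Icc 0 Real.pi)) (e : ENNReal) :
    MemLp f e (volume.restrict (Set.Ioc 0 Real.pi)) := by
  haveI : IsFiniteMeasure (volume.restrict (Set.Ioc (0:ℝ) Real.pi)) := by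
    constructor
    rw [Measure.restrict_apply_univ]
    simp [Real.volume_Ioc]
  obtain ⟨C, hC⟩ := isCompact_Icc.exists_bound_of_continuousOn hf
  refine MemLp.of_bound ?_ C ?_
  · exact (hf.mono Set.Ioc_subset_Icc_self).aestronglyMeasurable measurableSet_Ioc
  · filter_upwards [ae_restrict_mem measurableSet_Ioc] with x hx
    exact hC x (Set.Ioc_subset_Icc_self hx)

/-- resolvent estimate for the one-dimensional Dirichlet Laplacian on
`L^p(0,π)`, `p ∈ [2,∞)`: for `λ > 0` and `g` twice continuously differentiable on `[0,π]`
with `g(0) = g(π) = 0`, setting `h = λg - g''`, one has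
`λ ‖g‖_{L^p(0,π)} ≤ ‖h‖_{L^p(0,π)}`. -/
theorem stmt_19 (p : ℝ) (hp : 2 ≤ p) (lam : ℝ) (hlam : 0 < lam)
    (g : ℝ → ℝ) (hg : ContDiffOn ℝ 2 g (Set.Icc 0 Real.pi))
    (hg0 : g 0 = 0) (hgpi : g Real.pi = 0) :
    lam * (∫ ξ in (0 : ℝ)..Real.pi, |g ξ| ^ p) ^ (1 / p) ≤
      (∫ ξ in (0 : ℝ)..Real.pi,
        |lam * g ξ - iteratedDerivWithin 2 g (Set.Icc 0 Real.pi) ξ| ^ p) ^ (1 / p) := by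
  have hpi : (0:ℝ) < Real.pi := Real.pi_pos
  set s : Set ℝ := Set.Icc 0 Real.pi with hs_def
  have hsu : UniqueDiffOn ℝ s := uniqueDiffOn_Icc hpi
  set g1 : ℝ → ℝ := derivWithin g s with hg1_def
  set g2 : ℝ → ℝ := iteratedDerivWithin 2 g s with hg2_def
  have hgc : ContinuousOn g s := hg.continuousOn
  have hg1c : ContDiffOn ℝ 1 g1 s := hg.derivWithin hsu (by norm_num)
  have hg1cont : ContinuousOn g1 s := hg1c.continuousOn
  have hg2cont : ContinuousOn g2 s := hg.continuousOn_iteratedDerivWithin (by norm_num) hsu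
  have hg2_eq : ∀ x ∈ s, g2 x = derivWithin g1 s x := by
    intro x hx
    rw [hg2_def, show (2:ℕ) = 1 + 1 from rfl, iteratedDerivWithin_succ]
    exact derivWithin_congr (fun y hy => congrFun iteratedDerivWithin_one y)
      (congrFun iteratedDerivWithin_one x)
  -- derivatives at interior points
  have hmem : ∀ x ∈ Set.Ioo (0:ℝ) Real.pi, s ∈ nhds x := fun x hx => Icc_mem_nhds hx.1 hx.2
  have hgd : ∀ x ∈ Set.Ioo (0:ℝ) Real.pi, HasDerivAt g (g1 x) x := by
    intro x hx
    have h1 : DifferentiableWithinAt ℝ g s x :=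
      (hg.differentiableOn (by norm_num)) x (Set.Ioo_subset_Icc_self hx)
    exact h1.hasDerivWithinAt.hasDerivAt (hmem x hx)
  have hg1d : ∀ x ∈ Set.Ioo (0:ℝ) Real.pi, HasDerivAt g1 (g2 x) x := by
    intro x hx
    have h1 : DifferentiableWithinAt ℝ g1 s x :=
      (hg1c.differentiableOn (by norm_num)) x (Set.Ioo_subset_Icc_self hx)
    have := h1.hasDerivWithinAt.hasDerivAt (hmem x hx)
    rwa [← hg2_eq x (Set.Ioo_subset_Icc_self hx)] at this
  -- the test function Φ
  set Φ : ℝ → ℝ := fun x => |g x| ^ (p - 2) * g x with hΦ_def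
  have hfcont : Continuous (fun t : ℝ => |t| ^ (p - 2) * t) :=
    (continuous_abs.rpow_const (fun x => Or.inr (by linarith))).mul continuous_id
  have hΦcont : ContinuousOn Φ s := hfcont.comp_continuousOn hgc
  have hΦd : ∀ x ∈ Set.Ioo (0:ℝ) Real.pi,
      HasDerivAt Φ ((p - 1) * |g x| ^ (p - 2) * g1 x) x := by
    intro x hx
    exact (aux_hasDerivAt_phi hp (g x)).comp x (hgd x hx)
  -- integration by parts: ∫ g2 Φ ≤ 0
  have haux : ContinuousOn (fun x => (p - 1) * |g x| ^ (p - 2)) s :=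
    continuousOn_const.mul
      ((continuous_abs.rpow_const (fun t => Or.inr (by linarith))).comp_continuousOn hgc)
  have hint1 : IntervalIntegrable (fun x => g2 x * Φ x) volume 0 Real.pi := by
    apply ContinuousOn.intervalIntegrable
    rw [Set.uIcc_of_le hpi.le]; exact hg2cont.mul hΦcont
  have hint2 : IntervalIntegrable (fun x => g1 x * ((p - 1) * |g x| ^ (p - 2) * g1 x))
      volume 0 Real.pi := by
    apply ContinuousOn.intervalIntegrable
    rw [Set.uIcc_of_le hpi.le]; exact hg1cont.mul (haux.mul hg1cont)
  have hibp : ∫ x in (0:ℝ)..Real.pi,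
      (g2 x * Φ x + g1 x * ((p - 1) * |g x| ^ (p - 2) * g1 x)) = 0 := by
    have := intervalIntegral.integral_eq_sub_of_hasDerivAt_of_le hpi.le
      (f := fun x => g1 x * Φ x)
      (f' := fun x => g2 x * Φ x + g1 x * ((p - 1) * |g x| ^ (p - 2) * g1 x))
      (hg1cont.mul hΦcont)
      (fun x hx => (hg1d x hx).mul (hΦd x hx))
      (hint1.add hint2)
    rw [this, hΦ_def]
    simp [hg0, hgpi]
  have hg2Φ : ∫ x in (0:ℝ)..Real.pi, g2 x * Φ x ≤ 0 := by
    rw [intervalIntegral.integral_add hint1 hint2] at hibp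
    have hnn : 0 ≤ ∫ x in (0:ℝ)..Real.pi, g1 x * ((p - 1) * |g x| ^ (p - 2) * g1 x) := by
      apply intervalIntegral.integral_nonneg hpi.le
      intro x _
      have h1 : 0 ≤ |g x| ^ (p - 2) := Real.rpow_nonneg (abs_nonneg _) _
      have hrw : g1 x * ((p - 1) * |g x| ^ (p - 2) * g1 x)
          = (p - 1) * |g x| ^ (p - 2) * (g1 x * g1 x) := by ring
      rw [hrw]
      exact mul_nonneg (mul_nonneg (by linarith) h1) (mul_self_nonneg _)
    linarith
  -- pointwise identities
  have hgΦ : ∀ x, g x * Φ x = |g x| ^ p := by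
    intro x
    rcases eq_or_ne (g x) 0 with h0 | h0
    · rw [hΦ_def]; simp only [h0, mul_zero, abs_zero]
      rw [Real.zero_rpow (by linarith : p ≠ 0)]
    · have h2 : |g x| ^ ((2:ℕ):ℝ) = g x * g x := by
        rw [Real.rpow_natCast, sq_abs, sq]
      have key : |g x| ^ (p - 2) * |g x| ^ ((2:ℕ):ℝ) = |g x| ^ p := by
        rw [← Real.rpow_add' (abs_nonneg _) (by push_cast; linarith)]
        norm_num
      rw [hΦ_def]
      calc g x * (|g x| ^ (p - 2) * g x) = |g x| ^ (p - 2) * (g x * g x) := by ring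
        _ = |g x| ^ (p - 2) * |g x| ^ ((2:ℕ):ℝ) := by rw [h2]
        _ = |g x| ^ p := key
  have hΦabs : ∀ x, |Φ x| = |g x| ^ (p - 1) := by
    intro x
    rw [hΦ_def]
    rw [abs_mul, abs_of_nonneg (Real.rpow_nonneg (abs_nonneg _) _)]
    rcases eq_or_ne (g x) 0 with h0 | h0
    · simp only [h0, abs_zero, mul_zero]
      rw [Real.zero_rpow (by linarith : p - 1 ≠ 0)]
    · have e := Real.rpow_add' (abs_nonneg (g x)) (show p - 2 + 1 ≠ 0 by linarith)
      rw [Real.rpow_one] at e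
      rw [show p - 1 = p - 2 + 1 by ring, e]
  -- step 1 : lam * ∫ |g|^p ≤ ∫ h Φ
  have hintgp : IntervalIntegrable (fun x => |g x| ^ p) volume 0 Real.pi := by
    apply ContinuousOn.intervalIntegrable
    rw [Set.uIcc_of_le hpi.le]
    exact (continuous_abs.rpow_const (fun t => Or.inr (by linarith))).comp_continuousOn hgc
  have hhc : ContinuousOn (fun x => lam * g x - g2 x) s :=
    (continuousOn_const.mul hgc).sub hg2cont
  have e1 : ∫ x in (0:ℝ)..Real.pi, (lam * g x - g2 x) * Φ x
      = lam * (∫ x in (0:ℝ)..Real.pi, |g x| ^ p) - ∫ x in (0:ℝ)..Real.pi, g2 x * Φ x := by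
    have hrw : ∀ x, (lam * g x - g2 x) * Φ x = lam * |g x| ^ p - g2 x * Φ x := by
      intro x; rw [← hgΦ x]; ring
    simp_rw [hrw]
    rw [intervalIntegral.integral_sub (hintgp.const_mul lam) hint1,
      intervalIntegral.integral_const_mul]
  have step1 : lam * (∫ x in (0:ℝ)..Real.pi, |g x| ^ p)
      ≤ ∫ x in (0:ℝ)..Real.pi, (lam * g x - g2 x) * Φ x := by
    rw [e1]; linarith
  -- step 2 : Hölder
  set q : ℝ := p / (p - 1) with hq_def
  have hpq : p.HolderConjugate q := Real.HolderConjugate.conjExponent (by linarith)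
  have hmono : ∫ x in (0:ℝ)..Real.pi, (lam * g x - g2 x) * Φ x
      ≤ ∫ x in (0:ℝ)..Real.pi, |lam * g x - g2 x| * |g x| ^ (p - 1) := by
    apply intervalIntegral.integral_mono_on hpi.le
    · apply ContinuousOn.intervalIntegrable
      rw [Set.uIcc_of_le hpi.le]; exact hhc.mul hΦcont
    · apply ContinuousOn.intervalIntegrable
      rw [Set.uIcc_of_le hpi.le]
      exact hhc.abs.mul
        ((continuous_abs.rpow_const (fun t => Or.inr (by linarith))).comp_continuousOn hgc)
    · intro x _
      calc (lam * g x - g2 x) * Φ x ≤ |(lam * g x - g2 x) * Φ x| := le_abs_self _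
        _ = |lam * g x - g2 x| * |g x| ^ (p - 1) := by rw [abs_mul, hΦabs x]
  have hholder : ∫ x in (0:ℝ)..Real.pi, |lam * g x - g2 x| * |g x| ^ (p - 1)
      ≤ (∫ x in (0:ℝ)..Real.pi, |lam * g x - g2 x| ^ p) ^ (1/p)
        * (∫ x in (0:ℝ)..Real.pi, |g x| ^ p) ^ (1/q) := by
    rw [intervalIntegral.integral_of_le hpi.le, intervalIntegral.integral_of_le hpi.le,
      intervalIntegral.integral_of_le hpi.le]
    have hH := integral_mul_le_Lp_mul_Lq_of_nonneg (μ := volume.restrict (Set.Ioc 0 Real.pi)) hpq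
      (f := fun x => |lam * g x - g2 x|) (g := fun x => |g x| ^ (p - 1))
      (Filter.Eventually.of_forall (fun x => abs_nonneg _))
      (Filter.Eventually.of_forall (fun x => Real.rpow_nonneg (abs_nonneg _) _))
      (aux_memLp hhc.abs _)
      (aux_memLp ((continuous_abs.rpow_const
        (fun t => Or.inr (by linarith))).comp_continuousOn hgc) _)
    have hgq : ∀ x : ℝ, (|g x| ^ (p - 1)) ^ q = |g x| ^ p := by
      intro x
      rw [← Real.rpow_mul (abs_nonneg _), hpq.sub_one_mul_conj]
    simp_rw [hgq] at hH
    exact hH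
  -- combine
  set I : ℝ := ∫ x in (0:ℝ)..Real.pi, |g x| ^ p with hI_def
  set Hp : ℝ := (∫ x in (0:ℝ)..Real.pi, |lam * g x - g2 x| ^ p) ^ (1/p) with hHp_def
  have key : lam * I ≤ Hp * I ^ (1/q) := le_trans step1 (le_trans hmono hholder)
  have hI0 : 0 ≤ I := intervalIntegral.integral_nonneg hpi.le
    (fun x _ => Real.rpow_nonneg (abs_nonneg _) _)
  have hHp0 : 0 ≤ Hp :=
    Real.rpow_nonneg (intervalIntegral.integral_nonneg hpi.le
      (fun x _ => Real.rpow_nonneg (abs_nonneg _) _)) _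
  show lam * I ^ (1/p) ≤ Hp
  rcases eq_or_lt_of_le hI0 with hIz | hIpos
  · rw [← hIz, Real.zero_rpow (by positivity : (1:ℝ)/p ≠ 0), mul_zero]
    exact hHp0
  · have hsplit : I = I ^ (1/p) * I ^ (1/q) := by
      rw [← Real.rpow_add hIpos]
      rw [one_div, one_div, hpq.inv_add_inv_eq_one, Real.rpow_one]
    have h2 : lam * I ^ (1/p) * I ^ (1/q) ≤ Hp * I ^ (1/q) := by
      rw [mul_assoc, ← hsplit]; exact key
    have hq0 : (0:ℝ) < I ^ (1/q) := Real.rpow_pos_of_pos hIpos _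
    exact le_of_mul_le_mul_right h2 hq0
end
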